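/- arXiv:2207.04732 — 3 statements merged into one kernel-verified Lean document; each statement's English description precedes it below -/
import Mathlib

section
/- (Pohozaev identity for classical decaying solutions.) Let N ≥ 3 be an integer, let f : ℝ → ℝ be continuous and set F(t) = ∫₀^t f(s) ds. Let u : ℝ^N → ℝ be twice continuously differentiable and suppose there are constants C, μ > 0 such that |u(x)| + ‖∇u(x)‖ ≤ C·exp(−μ‖x‖) for all x ∈ ℝ^N. If −Δu(x) + u(x) = f(u(x)) for every x ∈ ℝ^N, then ((N−2)/2)·∫_{ℝ^N} ‖∇u‖² + N·( (1/2)·∫_{ℝ^N} u² − ∫_{ℝ^N} F(u) ) = 0. -/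
open MeasureTheory Metric Set Filter
open Topology

/-- The Laplacian of `u : ℝ^N → ℝ`: the sum of its second partial derivatives. -/
noncomputable def lap {N : ℕ} (u : EuclideanSpace ℝ (Fin N) → ℝ)
    (x : EuclideanSpace ℝ (Fin N)) : ℝ :=
  ∑ i : Fin N, fderiv ℝ (fun y => fderiv ℝ u y (EuclideanSpace.single i (1 : ℝ))) x
    (EuclideanSpace.single i (1 : ℝ))

noncomputable section Pohozaev

variable {N : ℕ}

local notation "𝔼" => EuclideanSpace ℝ (Fin N)

/-- basis directions -/
def pe (i : Fin N) : EuclideanSpace ℝ (Fin N) := EuclideanSpace.single i (1:ℝ)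

variable (u : EuclideanSpace ℝ (Fin N) → ℝ)

/-- i-th partial derivative -/
def pd (i : Fin N) (x : 𝔼) : ℝ := fderiv ℝ u x (pe i)

/-- second derivative of the i-th partial -/
def pD (i : Fin N) (x : 𝔼) : 𝔼 →L[ℝ] ℝ := fderiv ℝ (pd u i) x

lemma contDiff_pd (hu : ContDiff ℝ 2 u) (i : Fin N) : ContDiff ℝ 1 (pd u i) := by
  have h1 : ContDiff ℝ 1 (fderiv ℝ u) := hu.fderiv_right (by norm_num)
  exact (ContinuousLinearMap.apply ℝ ℝ (pe i)).contDiff.comp h1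

lemma hasFDerivAt_pd (hu : ContDiff ℝ 2 u) (i : Fin N) (x : 𝔼) :
    HasFDerivAt (pd u i) (pD u i x) x :=
  ((contDiff_pd u hu i).differentiable (by norm_num) x).hasFDerivAt

lemma pD_symm (hu : ContDiff ℝ 2 u) (i j : Fin N) (x : 𝔼) :
    pD u i x (pe j) = pD u j x (pe i) := by
  have hsymm : fderiv ℝ (fderiv ℝ u) x (pe j) (pe i) = fderiv ℝ (fderiv ℝ u) x (pe i) (pe j) :=
    (hu.contDiffAt.isSymmSndFDerivAt (by simp)) (pe j) (pe i)
  have key : ∀ k l : Fin N, pD u k x (pe l) = fderiv ℝ (fderiv ℝ u) x (pe l) (pe k) := by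
    intro k l
    have h1 : ContDiff ℝ 1 (fderiv ℝ u) := hu.fderiv_right (by norm_num)
    have hd : HasFDerivAt (fderiv ℝ u) (fderiv ℝ (fderiv ℝ u) x) x :=
      (h1.differentiable (by norm_num) x).hasFDerivAt
    have : HasFDerivAt (pd u k)
        ((ContinuousLinearMap.apply ℝ ℝ (pe k)).comp (fderiv ℝ (fderiv ℝ u) x)) x :=
      ((ContinuousLinearMap.apply ℝ ℝ (pe k)).hasFDerivAt).comp x hd
    rw [pD, this.fderiv]
    rfl
  rw [key, key, hsymm]

lemma lap_eq (x : 𝔼) : lap u x = ∑ i, pD u i x (pe i) := rfl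

lemma grad_sq (hu : ContDiff ℝ 2 u) (x : 𝔼) :
    ‖gradient u x‖ ^ 2 = ∑ i, (pd u i x) ^ 2 := by
  have hcoord : ∀ i, gradient u x i = pd u i x := by
    intro i
    have : (inner ℝ (gradient u x) (pe i) : ℝ) = fderiv ℝ u x (pe i) :=
      InnerProductSpace.toDual_symm_apply
    rw [pd, ← this, pe, real_inner_comm, EuclideanSpace.inner_single_left]
    simp
  rw [EuclideanSpace.norm_eq, Real.sq_sqrt (by positivity)]
  exact Finset.sum_congr rfl fun i _ => by rw [hcoord]; simp [sq_abs]

lemma pd_abs_le (hu : ContDiff ℝ 2 u) (i : Fin N) (x : 𝔼) : |pd u i x| ≤ ‖gradient u x‖ := by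
  have h := grad_sq u hu x
  have h1 : (pd u i x)^2 ≤ ‖gradient u x‖^2 := by
    rw [h]; exact Finset.single_le_sum (f := fun j => (pd u j x)^2) (fun j _ => sq_nonneg _) (Finset.mem_univ i)
  calc |pd u i x| = Real.sqrt ((pd u i x)^2) := (Real.sqrt_sq_eq_abs _).symm
    _ ≤ Real.sqrt (‖gradient u x‖^2) := Real.sqrt_le_sqrt h1
    _ = ‖gradient u x‖ := Real.sqrt_sq (norm_nonneg _)
variable (f F : ℝ → ℝ)

/-- coordinate projection as CLM -/
def prj (i : Fin N) : EuclideanSpace ℝ (Fin N) →L[ℝ] ℝ := EuclideanSpace.proj i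

lemma prj_pe (i j : Fin N) : prj (N := N) i (pe j) = if i = j then 1 else 0 := by
  simp [prj, pe, EuclideanSpace.single_apply]

/-- x · ∇u -/
def wf (x : 𝔼) : ℝ := ∑ j, x j * pd u j x

/-- energy density -/
def gf (x : 𝔼) : ℝ := (∑ j, (pd u j x)^2) * (1/2) + (u x)^2 * (1/2) - F (u x)

/-- Pohozaev vector field -/
def Vf (i : Fin N) (x : 𝔼) : ℝ := wf u x * pd u i x - x i * gf u F x

/-- derivative of wf -/
def Wf' (x : 𝔼) : 𝔼 →L[ℝ] ℝ :=
  ∑ j, ((x j) • pD u j x + (prj j).smulRight (pd u j x))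

/-- derivative of gf -/
def Gf' (x : 𝔼) : 𝔼 →L[ℝ] ℝ :=
  ((1:ℝ)/2) • (∑ j, (2 * pd u j x) • pD u j x)
    + ((1:ℝ)/2) • (u x • fderiv ℝ u x + u x • fderiv ℝ u x)
    - f (u x) • fderiv ℝ u x

/-- derivative of Vf -/
def Vf' (i : Fin N) (x : 𝔼) : 𝔼 →L[ℝ] ℝ :=
  (wf u x • pD u i x + (Wf' u x).smulRight (pd u i x))
    - (x i • Gf' u f x + (prj i).smulRight (gf u F x))

lemma hasDerivAt_F (hf : Continuous f) (hF : ∀ t : ℝ, F t = ∫ s in (0:ℝ)..t, f s) (t : ℝ) :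
    HasDerivAt F (f t) t := by
  have h : HasDerivAt (fun t => ∫ s in (0:ℝ)..t, f s) (f t) t :=
    intervalIntegral.integral_hasDerivAt_right (hf.intervalIntegrable _ _)
      (hf.stronglyMeasurableAtFilter _ _) hf.continuousAt
  have : F = fun t => ∫ s in (0:ℝ)..t, f s := funext hF
  rw [this]; exact h

lemma hasFDerivAt_wf (hu : ContDiff ℝ 2 u) (x : 𝔼) : HasFDerivAt (wf u) (Wf' u x) x := by
  apply HasFDerivAt.fun_sum
  intro j _
  exact ((prj j).hasFDerivAt).mul' (hasFDerivAt_pd u hu j x)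

lemma hasFDerivAt_u (hu : ContDiff ℝ 2 u) (x : 𝔼) : HasFDerivAt u (fderiv ℝ u x) x :=
  ((hu.differentiable (by norm_num)) x).hasFDerivAt

lemma hasFDerivAt_gf (hu : ContDiff ℝ 2 u) (hf : Continuous f)
    (hF : ∀ t : ℝ, F t = ∫ s in (0:ℝ)..t, f s) (x : 𝔼) :
    HasFDerivAt (gf u F) (Gf' u f x) x := by
  have hux := hasFDerivAt_u u hu x
  have h1 : HasFDerivAt (fun x : 𝔼 => (∑ j, (pd u j x)^2) * (1/2))
      (((1:ℝ)/2) • (∑ j, (2 * pd u j x) • pD u j x)) x := by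
    have hs : HasFDerivAt (fun x : 𝔼 => (∑ j, (pd u j x)^2))
        (∑ j, (2 * pd u j x) • pD u j x) x := by
      apply HasFDerivAt.fun_sum
      intro j _
      simpa [pow_two, two_mul, add_smul] using
        (show HasFDerivAt (fun y => pd u j y * pd u j y) _ x from
          (hasFDerivAt_pd u hu j x).mul (hasFDerivAt_pd u hu j x))
    simpa [smul_smul, mul_comm] using hs.mul_const ((1:ℝ)/2)
  have h2 : HasFDerivAt (fun x : 𝔼 => (u x)^2 * (1/2))
      (((1:ℝ)/2) • (u x • fderiv ℝ u x + u x • fderiv ℝ u x)) x := by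
    have hs : HasFDerivAt (fun x : 𝔼 => u x * u x)
        (u x • fderiv ℝ u x + u x • fderiv ℝ u x) x := hux.mul hux
    have := hs.mul_const ((1:ℝ)/2)
    simp only [pow_two]
    exact this
  have h3 : HasFDerivAt (fun x : 𝔼 => F (u x)) (f (u x) • fderiv ℝ u x) x :=
    (hasDerivAt_F f F hf hF (u x)).comp_hasFDerivAt x hux
  exact (h1.add h2).sub h3

lemma hasFDerivAt_Vf (hu : ContDiff ℝ 2 u) (hf : Continuous f)
    (hF : ∀ t : ℝ, F t = ∫ s in (0:ℝ)..t, f s) (i : Fin N) (x : 𝔼) :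
    HasFDerivAt (Vf u F i) (Vf' u f F i x) x := by
  have h1 : HasFDerivAt (fun x : 𝔼 => wf u x * pd u i x)
      (wf u x • pD u i x + (Wf' u x).smulRight (pd u i x)) x :=
    (hasFDerivAt_wf u hu x).mul' (hasFDerivAt_pd u hu i x)
  have h2 : HasFDerivAt (fun x : 𝔼 => x i * gf u F x)
      (x i • Gf' u f x + (prj i).smulRight (gf u F x)) x :=
    ((prj i).hasFDerivAt).mul' (hasFDerivAt_gf u f F hu hf hF x)
  exact h1.sub h2

lemma Wf'_pe (x : 𝔼) (i : Fin N) :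
    Wf' u x (pe i) = (∑ j, x j * pD u j x (pe i)) + pd u i x := by
  rw [Wf', ContinuousLinearMap.sum_apply]
  simp only [ContinuousLinearMap.add_apply, ContinuousLinearMap.smul_apply,
    ContinuousLinearMap.smulRight_apply, prj_pe, smul_eq_mul]
  rw [Finset.sum_add_distrib]
  congr 1
  simp [ite_mul, Finset.sum_ite_eq]

lemma fderiv_pe (x : 𝔼) (i : Fin N) : fderiv ℝ u x (pe i) = pd u i x := rfl

lemma Gf'_pe (x : 𝔼) (i : Fin N) :
    Gf' u f x (pe i) = (∑ j, pd u j x * pD u j x (pe i)) + (u x - f (u x)) * pd u i x := by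
  rw [Gf']
  simp only [ContinuousLinearMap.sub_apply, ContinuousLinearMap.add_apply,
    ContinuousLinearMap.smul_apply, ContinuousLinearMap.sum_apply, smul_eq_mul, fderiv_pe]
  rw [Finset.mul_sum]
  ring_nf

lemma Vf'_pe (x : 𝔼) (i : Fin N) :
    Vf' u f F i x (pe i) =
      wf u x * pD u i x (pe i) + (∑ j, x j * pD u j x (pe i)) * pd u i x
        + (pd u i x)^2 - x i * (∑ j, pd u j x * pD u j x (pe i))
        - (u x - f (u x)) * (x i * pd u i x) - gf u F x := by
  rw [Vf']
  simp only [ContinuousLinearMap.sub_apply, ContinuousLinearMap.add_apply,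
    ContinuousLinearMap.smul_apply, ContinuousLinearMap.smulRight_apply, smul_eq_mul,
    Wf'_pe, Gf'_pe, prj_pe]
  simp
  ring

lemma div_Vf (hu : ContDiff ℝ 2 u)
    (heq : ∀ x : 𝔼, -lap u x + u x = f (u x)) (x : 𝔼) :
    ∑ i, Vf' u f F i x (pe i) = (∑ i, (pd u i x)^2) - N * gf u F x := by
  have hL : u x - f (u x) = lap u x := by have := heq x; linarith
  have hswap : (∑ i, (∑ j, x j * pD u j x (pe i)) * pd u i x)
      = ∑ i, x i * (∑ j, pd u j x * pD u j x (pe i)) := by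
    have h2 : (∑ i, x i * (∑ j, pd u j x * pD u j x (pe i)))
        = ∑ i, ∑ j, x j * pD u j x (pe i) * pd u i x := by
      calc (∑ i, x i * (∑ j, pd u j x * pD u j x (pe i)))
          = ∑ i, ∑ j, x i * pD u i x (pe j) * pd u j x := by
            congr 1; funext i; rw [Finset.mul_sum]; congr 1; funext j
            rw [pD_symm u hu]; ring
        _ = ∑ i, ∑ j, x j * pD u j x (pe i) * pd u i x := Finset.sum_comm
    rw [h2]
    congr 1; funext i; rw [Finset.sum_mul]
  rw [Finset.sum_congr rfl (fun i _ => Vf'_pe u f F x i)]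
  simp only [Finset.sum_add_distrib, Finset.sum_sub_distrib, ← Finset.mul_sum,
    Finset.sum_const, Finset.card_univ, Fintype.card_fin, nsmul_eq_mul]
  rw [← lap_eq, hL]
  have hwf : (∑ i, x i * pd u i x) = wf u x := rfl
  rw [hwf]
  linear_combination hswap

lemma continuous_pd (hu : ContDiff ℝ 2 u) (i : Fin N) : Continuous (pd u i) :=
  (contDiff_pd u hu i).continuous

lemma continuous_F (hf : Continuous f) (hF : ∀ t : ℝ, F t = ∫ s in (0:ℝ)..t, f s) :
    Continuous F :=
  continuous_iff_continuousAt.2 fun t => (hasDerivAt_F f F hf hF t).continuousAt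

lemma continuous_gf (hu : ContDiff ℝ 2 u) (hf : Continuous f)
    (hF : ∀ t : ℝ, F t = ∫ s in (0:ℝ)..t, f s) : Continuous (gf u F) := by
  refine (((continuous_finset_sum _ fun i _ => (continuous_pd u hu i).pow 2).mul
    continuous_const).add (((hu.continuous.pow 2)).mul continuous_const)).sub
    ((continuous_F f F hf hF).comp hu.continuous)

lemma continuous_wf (hu : ContDiff ℝ 2 u) : Continuous (wf u) := by
  refine continuous_finset_sum _ fun j _ => ?_
  exact ((EuclideanSpace.proj j).continuous).mul (continuous_pd u hu j)

lemma continuous_Vf (hu : ContDiff ℝ 2 u) (hf : Continuous f)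
    (hF : ∀ t : ℝ, F t = ∫ s in (0:ℝ)..t, f s) (i : Fin N) : Continuous (Vf u F i) :=
  ((continuous_wf u hu).mul (continuous_pd u hu i)).sub
    (((EuclideanSpace.proj i).continuous).mul (continuous_gf u f F hu hf hF))

variable {μ C : ℝ}

lemma integrable_exp_decay (hμ : 0 < μ) :
    Integrable (fun x : 𝔼 => Real.exp (-μ * ‖x‖)) := by
  set m : ℕ := N + 1 with hm
  set c : ℝ := min (μ / m) 1 with hc
  have hc0 : 0 < c := lt_min (by positivity) one_pos
  have hc1 : c ≤ 1 := min_le_right _ _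
  have hcm : c * m ≤ μ := by
    have : c ≤ μ / m := min_le_left _ _
    rw [← le_div_iff₀ (by positivity)]
    exact this
  have key : ∀ x : 𝔼, Real.exp (-μ * ‖x‖) ≤ (c ^ m)⁻¹ * (1 + ‖x‖) ^ (-(m:ℝ)) := by
    intro x
    set t := ‖x‖ with ht
    have ht0 : 0 ≤ t := norm_nonneg _
    have h1t : (0:ℝ) < 1 + t := by linarith
    have h1 : c * (1 + t) ≤ Real.exp (c * t) := by
      have := Real.add_one_le_exp (c * t)
      nlinarith
    have h2 : c ^ m * (1 + t) ^ m ≤ Real.exp (μ * t) := by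
      calc c ^ m * (1 + t) ^ m = (c * (1 + t)) ^ m := (mul_pow _ _ _).symm
        _ ≤ Real.exp (c * t) ^ m := by
            apply pow_le_pow_left₀ (by positivity) h1
        _ = Real.exp (c * m * t) := by
            rw [← Real.exp_nat_mul]; ring_nf
        _ ≤ Real.exp (μ * t) := by
            apply Real.exp_le_exp.2
            have := mul_le_mul_of_nonneg_right hcm ht0
            linarith
    rw [Real.rpow_neg h1t.le, Real.rpow_natCast]
    rw [neg_mul, Real.exp_neg]
    rw [mul_comm ((c^m)⁻¹) _, ← mul_inv]
    apply inv_anti₀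
    · positivity
    · calc (1 + t)^m * c^m ≤ Real.exp (μ * t) := by rw [mul_comm]; exact h2
        _ = Real.exp (μ * t) := rfl
  have hint : Integrable (fun x : 𝔼 => (c ^ m)⁻¹ * (1 + ‖x‖) ^ (-(m:ℝ))) := by
    apply Integrable.const_mul
    apply integrable_one_add_norm
    rw [finrank_euclideanSpace_fin]
    exact_mod_cast Nat.lt_succ_self N
  refine hint.mono' ?_ ?_
  · exact (Real.continuous_exp.comp ((continuous_const.mul continuous_norm) : Continuous fun x : 𝔼 => -μ * ‖x‖)).aestronglyMeasurable
  · refine Filter.Eventually.of_forall fun x => ?_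
    rw [Real.norm_eq_abs, abs_of_pos (Real.exp_pos _)]
    exact key x

section Bounds

variable {u} {f F : ℝ → ℝ} {C μ : ℝ} (hu : ContDiff ℝ 2 u) (hC : 0 < C) (hμ : 0 < μ)
  (hdecay : ∀ x : EuclideanSpace ℝ (Fin N), |u x| + ‖gradient u x‖ ≤ C * Real.exp (-μ * ‖x‖))

include hdecay in
lemma u_bound (x : 𝔼) : |u x| ≤ C * Real.exp (-μ * ‖x‖) := by
  have := hdecay x; have := norm_nonneg (gradient u x); linarith

include hdecay in
lemma grad_bound (x : 𝔼) : ‖gradient u x‖ ≤ C * Real.exp (-μ * ‖x‖) := by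
  have := hdecay x; have := abs_nonneg (u x); linarith

lemma exp_le_one (hμ : 0 < μ) (x : 𝔼) : Real.exp (-μ * ‖x‖) ≤ 1 := by
  rw [Real.exp_le_one_iff]
  have := norm_nonneg x
  nlinarith

include hu hC hμ hdecay in
lemma P_bound (x : 𝔼) : ∑ i, (pd u i x)^2 ≤ C^2 * Real.exp (-μ * ‖x‖) := by
  have h1 := grad_bound hdecay x
  have h2 := exp_le_one (μ := μ) hμ x
  have h3 : (0:ℝ) < Real.exp (-μ * ‖x‖) := Real.exp_pos _
  have := grad_sq u hu x
  nlinarith [norm_nonneg (gradient u x)]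

lemma exists_F_bound (hf : Continuous f) (hF : ∀ t : ℝ, F t = ∫ s in (0:ℝ)..t, f s)
    (hC : 0 < C) :
    ∃ M : ℝ, 0 ≤ M ∧ (∀ t : ℝ, |t| ≤ C → |F t| ≤ M * |t|) ∧
      (∀ t : ℝ, |t| ≤ C → |f t| ≤ M) := by
  obtain ⟨M0, hM0⟩ := (isCompact_Icc (a := -C) (b := C)).exists_bound_of_continuousOn
    hf.continuousOn
  refine ⟨max M0 0, le_max_right _ _, fun t ht => ?_, fun t ht => ?_⟩
  · rw [hF t]
    have : ∀ s ∈ Set.uIoc (0:ℝ) t, ‖f s‖ ≤ max M0 0 := by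
      intro s hs
      have hs' : |s| ≤ |t| := by
        have h1 : min 0 t < s ∧ s ≤ max 0 t := by simpa [Set.uIoc] using hs
        have h2 : -|t| ≤ min 0 t := le_min (by simp [neg_abs_le, abs_nonneg]) (neg_abs_le t)
        have h3 : max 0 t ≤ |t| := max_le (abs_nonneg t) (le_abs_self t)
        rw [abs_le]; constructor <;> linarith [h1.1, h1.2]
      have : s ∈ Set.Icc (-C) C := by
        constructor <;> [linarith [abs_le.1 (hs'.trans ht) |>.1];
          linarith [abs_le.1 (hs'.trans ht) |>.2]]
      exact le_max_of_le_left (hM0 s this)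
    have := intervalIntegral.norm_integral_le_of_norm_le_const this
    simpa using this
  · have : t ∈ Set.Icc (-C) C := by
      constructor <;> [linarith [abs_le.1 ht |>.1]; linarith [abs_le.1 ht |>.2]]
    exact le_max_of_le_left (hM0 t this)

include hu hC hμ hdecay in
lemma gf_bound {M : ℝ} (hM : 0 ≤ M) (hFb : ∀ t : ℝ, |t| ≤ C → |F t| ≤ M * |t|)
    (x : 𝔼) : |gf u F x| ≤ (C^2 + M * C) * Real.exp (-μ * ‖x‖) := by
  have h1 := u_bound hdecay x
  have h2 := exp_le_one (μ := μ) hμ x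
  have h3 : (0:ℝ) < Real.exp (-μ * ‖x‖) := Real.exp_pos _
  have hP := P_bound hu hC hμ hdecay x
  have hP0 : 0 ≤ ∑ i, (pd u i x)^2 := Finset.sum_nonneg fun i _ => sq_nonneg _
  have huC : |u x| ≤ C := by nlinarith
  have hFu : |F (u x)| ≤ M * |u x| := hFb (u x) huC
  rw [gf, abs_sub_le_iff] at *
  constructor <;> rw [abs_le] at hFu <;> nlinarith [abs_nonneg (u x), sq_abs (u x),
    abs_le.1 h1]

end Bounds
section Int

variable {u} {f F : ℝ → ℝ} {C μ : ℝ} (hu : ContDiff ℝ 2 u) (hC : 0 < C) (hμ : 0 < μ)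
  (hdecay : ∀ x : EuclideanSpace ℝ (Fin N), |u x| + ‖gradient u x‖ ≤ C * Real.exp (-μ * ‖x‖))

include hu hC hμ hdecay in
lemma integrable_P2 : Integrable (fun x : 𝔼 => ∑ i, (pd u i x)^2) := by
  refine ((integrable_exp_decay (N := N) hμ).const_mul (C^2)).mono' ?_ ?_
  · exact (continuous_finset_sum _ fun i _ => (continuous_pd u hu i).pow 2).aestronglyMeasurable
  · refine Filter.Eventually.of_forall fun x => ?_
    rw [Real.norm_eq_abs, abs_of_nonneg (Finset.sum_nonneg fun i _ => sq_nonneg _)]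
    exact P_bound hu hC hμ hdecay x

include hu hC hμ hdecay in
lemma integrable_u2 : Integrable (fun x : 𝔼 => (u x)^2) := by
  refine ((integrable_exp_decay (N := N) hμ).const_mul (C^2)).mono' ?_ ?_
  · exact (hu.continuous.pow 2).aestronglyMeasurable
  · refine Filter.Eventually.of_forall fun x => ?_
    have h1 := u_bound hdecay x
    have h2 := exp_le_one (μ := μ) hμ x
    have h3 : (0:ℝ) < Real.exp (-μ * ‖x‖) := Real.exp_pos _
    rw [Real.norm_eq_abs, ← sq_abs]
    have h4 : 0 ≤ |u x| := abs_nonneg (u x)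
    have h5 : |u x|^2 ≤ (C * Real.exp (-μ * ‖x‖))^2 := by nlinarith
    rw [abs_of_nonneg (sq_nonneg _)]
    have h6 : (C * Real.exp (-μ * ‖x‖))^2 ≤ C^2 * Real.exp (-μ * ‖x‖) := by nlinarith
    linarith

include hu hC hμ hdecay in
lemma integrable_Fu {M : ℝ} (hM : 0 ≤ M) (hf : Continuous f)
    (hF : ∀ t : ℝ, F t = ∫ s in (0:ℝ)..t, f s)
    (hFb : ∀ t : ℝ, |t| ≤ C → |F t| ≤ M * |t|) :
    Integrable (fun x : 𝔼 => F (u x)) := by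
  refine ((integrable_exp_decay (N := N) hμ).const_mul (M * C)).mono' ?_ ?_
  · exact ((continuous_F f F hf hF).comp hu.continuous).aestronglyMeasurable
  · refine Filter.Eventually.of_forall fun x => ?_
    have h1 := u_bound hdecay x
    have h2 := exp_le_one (μ := μ) hμ x
    have h3 : (0:ℝ) < Real.exp (-μ * ‖x‖) := Real.exp_pos _
    have huC : |u x| ≤ C := by nlinarith
    have := hFb (u x) huC
    rw [Real.norm_eq_abs]
    calc |F (u x)| ≤ M * |u x| := this
      _ ≤ M * (C * Real.exp (-μ * ‖x‖)) := by nlinarith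
      _ = M * C * Real.exp (-μ * ‖x‖) := by ring

include hu hC hμ hdecay in
lemma integrable_gf {M : ℝ} (hM : 0 ≤ M) (hf : Continuous f)
    (hF : ∀ t : ℝ, F t = ∫ s in (0:ℝ)..t, f s)
    (hFb : ∀ t : ℝ, |t| ≤ C → |F t| ≤ M * |t|) :
    Integrable (gf u F) := by
  refine ((integrable_exp_decay (N := N) hμ).const_mul (C^2 + M * C)).mono' ?_ ?_
  · exact (continuous_gf u f F hu hf hF).aestronglyMeasurable
  · exact Filter.Eventually.of_forall fun x => by
      rw [Real.norm_eq_abs]; exact gf_bound hu hC hμ hdecay hM hFb x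

lemma abs_coord_le_norm (x : 𝔼) (i : Fin N) : |x i| ≤ ‖x‖ := by
  rw [EuclideanSpace.norm_eq, ← Real.sqrt_sq_eq_abs]
  apply Real.sqrt_le_sqrt
  calc (x i)^2 = ‖x i‖^2 := by rw [Real.norm_eq_abs, sq_abs]
    _ ≤ ∑ j, ‖x j‖^2 := Finset.single_le_sum (f := fun j => ‖x j‖^2)
        (fun j _ => sq_nonneg _) (Finset.mem_univ i)

include hu hC hμ hdecay in
lemma Vf_face_bound {M : ℝ} (hM : 0 ≤ M)
    (hFb : ∀ t : ℝ, |t| ≤ C → |F t| ≤ M * |t|) {R : ℝ} (hR : 0 < R) (i : Fin N)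
    (x : 𝔼) (hco : ∀ j, |x j| ≤ R) (hnx : R ≤ ‖x‖) :
    |Vf u F i x| ≤ R * ((N : ℝ) * C^2 + C^2 + M * C) * Real.exp (-μ * R) := by
  have e1 : Real.exp (-μ * ‖x‖) ≤ Real.exp (-μ * R) := by
    apply Real.exp_le_exp.2; nlinarith
  have e0 : Real.exp (-μ * ‖x‖) ≤ 1 := exp_le_one hμ x
  have e0' : Real.exp (-μ * R) ≤ 1 := by
    rw [Real.exp_le_one_iff]; nlinarith
  have h3 : (0:ℝ) < Real.exp (-μ * ‖x‖) := Real.exp_pos _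
  have h3' : (0:ℝ) < Real.exp (-μ * R) := Real.exp_pos _
  have hpd : ∀ j, |pd u j x| ≤ C * Real.exp (-μ * ‖x‖) := fun j =>
    (pd_abs_le u hu j x).trans (grad_bound hdecay x)
  have hwf : |wf u x| ≤ (N : ℝ) * (R * (C * Real.exp (-μ * ‖x‖))) := by
    rw [wf]
    refine (Finset.abs_sum_le_sum_abs _ _).trans ?_
    have hterm : ∀ j ∈ Finset.univ, |x j * pd u j x| ≤ R * (C * Real.exp (-μ * ‖x‖)) := by
      intro j _
      rw [abs_mul]
      exact mul_le_mul (hco j) (hpd j) (abs_nonneg _) hR.le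
    calc ∑ j, |x j * pd u j x| ≤ ∑ _j : Fin N, R * (C * Real.exp (-μ * ‖x‖)) :=
          Finset.sum_le_sum hterm
      _ = (N : ℝ) * (R * (C * Real.exp (-μ * ‖x‖))) := by
          rw [Finset.sum_const, Finset.card_univ, Fintype.card_fin, nsmul_eq_mul]
  have hgf := gf_bound hu hC hμ hdecay hM hFb x
  have step : |Vf u F i x| ≤ |wf u x| * |pd u i x| + |x i| * |gf u F x| := by
    rw [Vf]
    exact (abs_sub _ _).trans (by rw [abs_mul, abs_mul])
  have hNn : (0:ℝ) ≤ (N:ℝ) := Nat.cast_nonneg N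
  calc |Vf u F i x| ≤ |wf u x| * |pd u i x| + |x i| * |gf u F x| := step
    _ ≤ ((N : ℝ) * (R * (C * Real.exp (-μ * ‖x‖)))) * (C * 1)
        + R * ((C^2 + M * C) * Real.exp (-μ * ‖x‖)) := by
        have b1 : |pd u i x| ≤ C * 1 := (hpd i).trans (by nlinarith)
        have b2 : |x i| * |gf u F x| ≤ R * ((C^2 + M * C) * Real.exp (-μ * ‖x‖)) := by
          apply mul_le_mul (hco i) hgf (abs_nonneg _) hR.le
        have b3 : |wf u x| * |pd u i x| ≤ ((N : ℝ) * (R * (C * Real.exp (-μ * ‖x‖)))) * (C * 1) := by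
          apply mul_le_mul hwf b1 (abs_nonneg _) (by positivity)
        linarith
    _ ≤ R * ((N : ℝ) * C^2 + C^2 + M * C) * Real.exp (-μ * R) := by
        nlinarith [mul_le_mul_of_nonneg_left e1
          (by positivity : (0:ℝ) ≤ R * ((N:ℝ) * C^2 + C^2 + M * C))]

end Int
end Pohozaev

/-- Pohozaev identity for classical decaying solutions of `-Δu + u = f(u)` on `ℝ^N`. -/
theorem stmt2 (N : ℕ) (hN : 3 ≤ N) (f : ℝ → ℝ) (hf : Continuous f)
    (F : ℝ → ℝ) (hF : ∀ t : ℝ, F t = ∫ s in (0 : ℝ)..t, f s)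
    (u : EuclideanSpace ℝ (Fin N) → ℝ) (hu : ContDiff ℝ 2 u)
    (C μ : ℝ) (hC : 0 < C) (hμ : 0 < μ)
    (hdecay : ∀ x : EuclideanSpace ℝ (Fin N),
      |u x| + ‖gradient u x‖ ≤ C * Real.exp (-μ * ‖x‖))
    (heq : ∀ x : EuclideanSpace ℝ (Fin N), -lap u x + u x = f (u x)) :
    ((N : ℝ) - 2) / 2 * (∫ x : EuclideanSpace ℝ (Fin N), ‖gradient u x‖ ^ 2) +
      (N : ℝ) * ((1 / 2) * (∫ x : EuclideanSpace ℝ (Fin N), (u x) ^ 2) -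
        ∫ x : EuclideanSpace ℝ (Fin N), F (u x)) = 0 := by
  obtain ⟨n, rfl⟩ : ∃ n, N = n + 1 := ⟨N - 1, by omega⟩
  obtain ⟨M, hM0, hFb, hfb⟩ := exists_F_bound hf hF hC
  have mp : MeasurePreserving (MeasurableEquiv.toLp 2 (Fin (n+1) → ℝ)) volume volume :=
    (EuclideanSpace.volume_preserving_symm_measurableEquiv_toLp _).symm
  set es : (Fin (n+1) → ℝ) → EuclideanSpace ℝ (Fin (n+1)) :=
    ⇑(MeasurableEquiv.toLp 2 (Fin (n+1) → ℝ)) with hes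
  set L : (Fin (n+1) → ℝ) ≃L[ℝ] EuclideanSpace ℝ (Fin (n+1)) :=
    (EuclideanSpace.equiv (Fin (n+1)) ℝ).symm with hLdef
  have hesL : es = ⇑L := rfl
  have hes_apply : ∀ (z : Fin (n+1) → ℝ) (j : Fin (n+1)), es z j = z j := by
    intro z j
    rw [hes]
    rfl
  set K : ℝ := ((n+1 : ℕ) : ℝ) * C^2 + C^2 + M * C with hK
  have hK0 : 0 ≤ K := by positivity
  set hfun : EuclideanSpace ℝ (Fin (n+1)) → ℝ :=
    fun x => (∑ i, (pd u i x)^2) - ((n + 1 : ℕ) : ℝ) * gf u F x with hhfun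
  have hcont_hfun : Continuous hfun := by
    refine ((continuous_finset_sum _ fun i _ => (continuous_pd u hu i).pow 2)).sub
      (continuous_const.mul (continuous_gf u f F hu hf hF))
  -- Step 1: the divergence identity on cubes
  have key : ∀ R : ℝ, 0 < R →
      |∫ x in es '' (Icc (fun _ : Fin (n+1) => -R) (fun _ => R)), hfun x|
        ≤ ((n+1:ℕ):ℝ) * (2 * ((R * K * Real.exp (-μ * R)) * (2*R)^n)) := by
    intro R hR
    set a : Fin (n+1) → ℝ := fun _ => -R with ha
    set b : Fin (n+1) → ℝ := fun _ => R with hb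
    have hle : a ≤ b := fun i => by simp only [ha, hb]; linarith
    set ff : Fin (n+1) → (Fin (n+1) → ℝ) → ℝ := fun i y => Vf u F i (es y) with hff
    set ff' : Fin (n+1) → (Fin (n+1) → ℝ) → (Fin (n+1) → ℝ) →L[ℝ] ℝ :=
      fun i y => (Vf' u f F i (es y)).comp
        (L : (Fin (n+1) → ℝ) →L[ℝ] EuclideanSpace ℝ (Fin (n+1))) with hff'
    have hsingle : ∀ i : Fin (n+1),
        (L : (Fin (n+1) → ℝ) →L[ℝ] EuclideanSpace ℝ (Fin (n+1))) (Pi.single i 1) = pe i :=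
      fun i => rfl
    have hdiv : ∀ y, ∑ i, ff' i y (Pi.single i 1) = hfun (es y) := by
      intro y
      simp only [hff', ContinuousLinearMap.comp_apply]
      rw [Finset.sum_congr rfl fun i _ => by rw [hsingle i]]
      exact div_Vf u f F hu heq (es y)
    have Hc : ∀ i, ContinuousOn (ff i) (Icc a b) :=
      fun i => ((continuous_Vf u f F hu hf hF i).comp L.continuous).continuousOn
    have Hd : ∀ y ∈ (Set.pi Set.univ fun i => Ioo (a i) (b i)) \ (∅ : Set (Fin (n+1) → ℝ)),
        ∀ i, HasFDerivAt (ff i) (ff' i y) y := by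
      intro y _ i
      exact (hasFDerivAt_Vf u f F hu hf hF i (L y)).comp y L.hasFDerivAt
    have Hi : IntegrableOn (fun y => ∑ i, ff' i y (Pi.single i 1)) (Icc a b) := by
      rw [show (fun y => ∑ i, ff' i y (Pi.single i 1)) = fun y => hfun (es y) from funext hdiv]
      exact ((hcont_hfun.comp L.continuous)).continuousOn.integrableOn_compact isCompact_Icc
    have heqn := integral_divergence_of_hasFDerivAt_off_countable' a b hle ff ff' ∅
      countable_empty Hc Hd Hi
    have hLHS : ∫ y in Icc a b, ∑ i, ff' i y (Pi.single i 1) = ∫ x in es '' Icc a b, hfun x := by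
      rw [show (fun y => ∑ i, ff' i y (Pi.single i 1)) = fun y => hfun (es y) from funext hdiv]
      exact (mp.setIntegral_image_emb
        (MeasurableEquiv.toLp 2 (Fin (n+1) → ℝ)).measurableEmbedding hfun _).symm
    -- face bounds
    have hface : ∀ (i : Fin (n+1)) (c : ℝ), |c| = R →
        |∫ y in Icc (a ∘ i.succAbove) (b ∘ i.succAbove), ff i (i.insertNth c y)|
          ≤ (R * K * Real.exp (-μ * R)) * (2*R)^n := by
      intro i c hc
      have hbound : ∀ y ∈ Icc (a ∘ i.succAbove) (b ∘ i.succAbove),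
          ‖ff i (i.insertNth c y)‖ ≤ R * K * Real.exp (-μ * R) := by
        intro y hy
        have hco : ∀ j, |es (i.insertNth c y) j| ≤ R := by
          intro j
          rw [hes_apply]
          refine Fin.succAboveCases i ?_ ?_ j
          · simp only [Fin.insertNth_apply_same]
            rw [hc]
          · intro k
            simp only [Fin.insertNth_apply_succAbove]
            have h1 := hy.1 k
            have h2 := hy.2 k
            simp only [Function.comp_apply, ha, hb] at h1 h2
            rw [abs_le]; exact ⟨h1, h2⟩
        have hnx : R ≤ ‖es (i.insertNth c y)‖ := by
          have h1 : |es (i.insertNth c y) i| ≤ ‖es (i.insertNth c y)‖ :=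
            abs_coord_le_norm (es (i.insertNth c y)) i
          have h2 : es (i.insertNth c y) i = c := by
            rw [hes_apply]
            simp [Fin.insertNth_apply_same]
          rw [h2] at h1; rw [← hc]; exact h1
        rw [Real.norm_eq_abs]
        have := Vf_face_bound hu hC hμ hdecay hM0 hFb hR i (es (i.insertNth c y)) hco hnx
        rw [hK]
        exact this
      have hvol : volume (Icc (a ∘ i.succAbove) (b ∘ i.succAbove)) < ⊤ :=
        isCompact_Icc.measure_lt_top
      have := norm_setIntegral_le_of_norm_le_const hvol hbound
      rw [Real.norm_eq_abs, measureReal_def] at this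
      refine this.trans ?_
      have hvolval : (volume (Icc (a ∘ i.succAbove) (b ∘ i.succAbove))).toReal = (2*R)^n := by
        rw [Real.volume_Icc_pi_toReal (fun k => by simp [ha, hb]; linarith)]
        have hpt : ∀ k : Fin n, (b ∘ i.succAbove) k - (a ∘ i.succAbove) k = 2*R :=
          fun k => by simp [ha, hb]; ring
        rw [Finset.prod_congr rfl fun k _ => hpt k, Finset.prod_const, Finset.card_univ,
          Fintype.card_fin]
      rw [hvolval]
    rw [← hLHS, heqn]
    have hstep : ∀ i : Fin (n+1),
        |(∫ y in Icc (a ∘ i.succAbove) (b ∘ i.succAbove), ff i (i.insertNth (b i) y))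
          - ∫ y in Icc (a ∘ i.succAbove) (b ∘ i.succAbove), ff i (i.insertNth (a i) y)|
          ≤ 2 * ((R * K * Real.exp (-μ * R)) * (2*R)^n) := by
      intro i
      have hA := hface i (b i) (by simp only [hb]; exact abs_of_pos hR)
      have hB := hface i (a i) (by simp only [ha]; rw [abs_neg]; exact abs_of_pos hR)
      have := abs_sub (∫ y in Icc (a ∘ i.succAbove) (b ∘ i.succAbove), ff i (i.insertNth (b i) y))
        (∫ y in Icc (a ∘ i.succAbove) (b ∘ i.succAbove), ff i (i.insertNth (a i) y))
      linarith
    calc |∑ i : Fin (n+1), ((∫ y in Icc (a ∘ i.succAbove) (b ∘ i.succAbove),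
            ff i (i.insertNth (b i) y))
          - ∫ y in Icc (a ∘ i.succAbove) (b ∘ i.succAbove), ff i (i.insertNth (a i) y))|
        ≤ ∑ i : Fin (n+1), |(∫ y in Icc (a ∘ i.succAbove) (b ∘ i.succAbove),
            ff i (i.insertNth (b i) y))
          - ∫ y in Icc (a ∘ i.succAbove) (b ∘ i.succAbove), ff i (i.insertNth (a i) y)| :=
          Finset.abs_sum_le_sum_abs _ _
      _ ≤ ∑ _i : Fin (n+1), 2 * ((R * K * Real.exp (-μ * R)) * (2*R)^n) :=
          Finset.sum_le_sum fun i _ => hstep i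
      _ = ((n+1:ℕ):ℝ) * (2 * ((R * K * Real.exp (-μ * R)) * (2*R)^n)) := by
          rw [Finset.sum_const, Finset.card_univ, Fintype.card_fin, nsmul_eq_mul]
  -- Step 2: pass to the limit
  have hintegrable : Integrable hfun := by
    refine (integrable_P2 hu hC hμ hdecay).sub ?_
    exact (integrable_gf hu hC hμ hdecay hM0 hf hF hFb).const_mul _
  set S : ℕ → Set (EuclideanSpace ℝ (Fin (n+1))) :=
    fun k => es '' (Icc (fun _ : Fin (n+1) => -((k:ℝ)+1)) (fun _ => (k:ℝ)+1)) with hS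
  have hSm : ∀ k, MeasurableSet (S k) := fun k =>
    (MeasurableEquiv.toLp 2 (Fin (n+1) → ℝ)).measurableEmbedding.measurableSet_image.2
      measurableSet_Icc
  have hmono : Monotone S := by
    intro k l hkl
    apply Set.image_mono
    apply Set.Icc_subset_Icc
    · intro j
      simp only
      have : (k:ℝ) ≤ l := Nat.cast_le.2 hkl
      linarith
    · intro j
      simp only
      have : (k:ℝ) ≤ l := Nat.cast_le.2 hkl
      linarith
  have hunion : ⋃ k, S k = univ := by
    apply Set.eq_univ_of_forall
    intro x
    obtain ⟨k, hk⟩ := exists_nat_ge ‖x‖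
    refine Set.mem_iUnion.2 ⟨k, ?_⟩
    refine ⟨(MeasurableEquiv.toLp 2 (Fin (n+1) → ℝ)).symm x, ?_, ?_⟩
    · constructor <;> intro j
      · have h1 : |x j| ≤ ‖x‖ := abs_coord_le_norm x j
        have h2 : (MeasurableEquiv.toLp 2 (Fin (n+1) → ℝ)).symm x j = x j := rfl
        rw [h2]
        have := abs_le.1 h1
        simp only
        linarith [this.1]
      · have h1 : |x j| ≤ ‖x‖ := abs_coord_le_norm x j
        have h2 : (MeasurableEquiv.toLp 2 (Fin (n+1) → ℝ)).symm x j = x j := rfl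
        rw [h2]
        have := abs_le.1 h1
        simp only
        linarith [this.2]
    · exact (MeasurableEquiv.toLp 2 (Fin (n+1) → ℝ)).apply_symm_apply x
  have htend1 : Tendsto (fun k => ∫ x in S k, hfun x) atTop (𝓝 (∫ x, hfun x)) := by
    have := tendsto_setIntegral_of_monotone hSm hmono (by rw [hunion]; exact hintegrable.integrableOn)
    rwa [hunion, setIntegral_univ] at this
  have htend0 : Tendsto (fun k : ℕ =>
      ((n+1:ℕ):ℝ) * (2 * ((((k:ℝ)+1) * K * Real.exp (-μ * ((k:ℝ)+1))) * (2*((k:ℝ)+1))^n)))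
      atTop (𝓝 0) := by
    have hpoly : Tendsto (fun R : ℝ => R^(n+1) * Real.exp (-μ * R)) atTop (𝓝 0) := by
      have h1 : Tendsto (fun y : ℝ => y^(n+1) * Real.exp (-y)) atTop (𝓝 0) :=
        Real.tendsto_pow_mul_exp_neg_atTop_nhds_zero (n+1)
      have h2 : Tendsto (fun R : ℝ => μ * R) atTop atTop :=
        Tendsto.const_mul_atTop hμ tendsto_id
      have h3 := h1.comp h2
      have h4 := h3.const_mul ((μ^(n+1))⁻¹)
      rw [mul_zero] at h4
      convert h4 using 2 with R
      simp only [Function.comp_apply]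
      rw [mul_pow]
      field_simp
    have h5 := (hpoly.const_mul (((n+1:ℕ):ℝ) * (2 * (K * 2^n)))).comp
      (tendsto_atTop_add_const_right atTop (1:ℝ) tendsto_natCast_atTop_atTop)
    rw [mul_zero] at h5
    convert h5 using 2 with k
    simp only [Function.comp_apply]
    rw [mul_pow]
    ring
  have hzero : ∫ x, hfun x = 0 := by
    refine tendsto_nhds_unique htend1 ?_
    refine squeeze_zero_norm (fun k => ?_) htend0
    rw [Real.norm_eq_abs]
    exact key ((k:ℝ)+1) (by positivity)
  -- Step 3: algebra
  have hIP := integrable_P2 hu hC hμ hdecay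
  have hIu2 := integrable_u2 hu hC hμ hdecay
  have hIF := integrable_Fu hu hC hμ hdecay hM0 hf hF hFb
  have hIgf := integrable_gf hu hC hμ hdecay hM0 hf hF hFb
  have hsplit : ∫ x, hfun x = (∫ x, ∑ i, (pd u i x)^2)
      - ((n+1:ℕ):ℝ) * ∫ x, gf u F x := by
    rw [hhfun, integral_sub hIP (hIgf.const_mul _), integral_const_mul]
  have hgfsplit : ∫ x, gf u F x = (∫ x, ∑ i, (pd u i x)^2) * (1/2)
      + (∫ x, (u x)^2) * (1/2) - ∫ x, F (u x) := by
    have h0 : ∫ x, gf u F x = ∫ x, ((∑ i, (pd u i x)^2) * (1/2) + (u x)^2 * (1/2) - F (u x)) := rfl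
    have h1 : Integrable (fun x : EuclideanSpace ℝ (Fin (n+1)) =>
        (∑ i, (pd u i x)^2) * (1/2)) := hIP.mul_const _
    have h2 : Integrable (fun x : EuclideanSpace ℝ (Fin (n+1)) => (u x)^2 * (1/2)) :=
      hIu2.mul_const _
    have hadd : Integrable (fun x : EuclideanSpace ℝ (Fin (n+1)) =>
        (∑ i, (pd u i x)^2) * (1/2) + (u x)^2 * (1/2)) := by exact h1.add h2
    rw [h0, integral_sub hadd hIF, integral_add h1 h2, integral_mul_const, integral_mul_const]
  have hgrad : ∫ x, ‖gradient u x‖^2 = ∫ x, ∑ i, (pd u i x)^2 :=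
    integral_congr_ae (Filter.Eventually.of_forall fun x => grad_sq u hu x)
  rw [hgrad]
  rw [hsplit, hgfsplit] at hzero
  push_cast at hzero ⊢
  linarith
end

section
/- (Lions-type vanishing lemma.) Let N ≥ 3 be an integer, 2* = 2N/(N−2), and let R > 0 and C > 0. Let (u_n) be a sequence of continuously differentiable functions u_n : ℝ^N → ℝ such that for every n: ∫_{ℝ^N} u_n² ≤ C, ∫_{ℝ^N} ‖∇u_n‖² ≤ C, and |u_n|^{2*} is integrable on ℝ^N. If sup_{x ∈ ℝ^N} ∫_{B_R(x)} |u_n|^{2*} → 0 as n → ∞, then ∫_{ℝ^N} |u_n|^{2*} → 0 as n → ∞. -/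
open MeasureTheory Metric Set Filter
open scoped NNReal ENNReal

variable {N : ℕ}

noncomputable def ctr (N : ℕ) (s : ℝ) (k : Fin N → ℤ) : EuclideanSpace ℝ (Fin N) :=
  WithLp.toLp 2 (fun i => s * k i)

lemma coord_dist_le (x y : EuclideanSpace ℝ (Fin N)) (i : Fin N) :
    |x i - y i| ≤ dist x y := by
  rw [EuclideanSpace.dist_eq]
  rw [← Real.sqrt_sq_eq_abs]
  apply Real.sqrt_le_sqrt
  have : (x i - y i) ^ 2 = dist (x i) (y i) ^ 2 := by rw [Real.dist_eq, sq_abs]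
  rw [this]
  exact Finset.single_le_sum (f := fun j => dist (x j) (y j) ^ 2)
    (fun j _ => sq_nonneg _) (Finset.mem_univ i)

lemma dist_le_of_coord {x y : EuclideanSpace ℝ (Fin N)} {t : ℝ}
    (h : ∀ i, |x i - y i| ≤ t) (ht : 0 ≤ t) : dist x y ≤ t * Real.sqrt N := by
  rw [EuclideanSpace.dist_eq]
  have h1 : ∑ i, dist (x i) (y i) ^ 2 ≤ N * t ^ 2 := by
    calc ∑ i, dist (x i) (y i) ^ 2 ≤ ∑ _i : Fin N, t ^ 2 := by
          apply Finset.sum_le_sum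
          intro i _
          rw [Real.dist_eq]
          exact sq_le_sq' (by linarith [(h i), abs_nonneg (x i - y i)]) (h i)
      _ = N * t ^ 2 := by simp [mul_comm]
  calc Real.sqrt (∑ i, dist (x i) (y i) ^ 2) ≤ Real.sqrt (N * t ^ 2) := Real.sqrt_le_sqrt h1
    _ = t * Real.sqrt N := by
        rw [Real.sqrt_mul (by positivity), Real.sqrt_sq ht, mul_comm]

lemma cube_subset_ball {s : ℝ} (hs : 0 < s) (k : Fin N → ℤ) (y : EuclideanSpace ℝ (Fin N))
    (hy : ∀ i, ⌊y i / s⌋ = k i) : dist y (ctr N s k) ≤ s * Real.sqrt N := by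
  apply dist_le_of_coord _ hs.le
  intro i
  have h1 : (k i : ℝ) ≤ y i / s := by rw [← hy i]; exact Int.floor_le _
  have h2 : y i / s < k i + 1 := by rw [← hy i]; exact Int.lt_floor_add_one _
  have hsi : ctr N s k i = s * k i := rfl
  rw [hsi, abs_le]
  constructor
  · nlinarith [(le_div_iff₀ hs).1 h1]
  · nlinarith [(div_le_iff₀ hs).1 (le_of_lt h2)]

lemma counting {s R : ℝ} (hs : 0 < s) (hR : 0 < R) (x : EuclideanSpace ℝ (Fin N)) :
    ∑' (k : Fin N → ℤ), (closedBall (ctr N s k) R).indicator (fun _ => (1 : ℝ≥0∞)) x ≤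
      ((⌈2 * R / s⌉₊ + 1 : ℕ) ^ N : ℕ) := by
  set lo : Fin N → ℤ := fun i => ⌈(x i - R) / s⌉
  set hi : Fin N → ℤ := fun i => ⌊(x i + R) / s⌋
  have hzero : ∀ k ∉ Finset.Icc lo hi,
      (closedBall (ctr N s k) R).indicator (fun _ => (1 : ℝ≥0∞)) x = 0 := by
    intro k hk
    rw [Set.indicator_apply_eq_zero]
    intro hxk
    exfalso
    apply hk
    rw [Finset.mem_Icc]
    constructor <;> intro i
    · -- lo i ≤ k i
      have := coord_dist_le x (ctr N s k) i
      have hd : |x i - s * k i| ≤ R := le_trans this (mem_closedBall.1 hxk)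
      have : x i - R ≤ s * k i := by cases abs_le.1 hd; linarith
      have : (x i - R) / s ≤ k i := (div_le_iff₀ hs).2 (by linarith [this])
      exact Int.ceil_le.2 this
    · have := coord_dist_le x (ctr N s k) i
      have hd : |x i - s * k i| ≤ R := le_trans this (mem_closedBall.1 hxk)
      have : s * k i ≤ x i + R := by cases abs_le.1 hd; linarith
      have : (k i : ℝ) ≤ (x i + R) / s := (le_div_iff₀ hs).2 (by linarith [this])
      exact Int.le_floor.2 this
  rw [tsum_eq_sum hzero]
  calc ∑ k ∈ Finset.Icc lo hi, (closedBall (ctr N s k) R).indicator (fun _ => (1 : ℝ≥0∞)) x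
      ≤ ∑ _k ∈ Finset.Icc lo hi, (1 : ℝ≥0∞) := by
        apply Finset.sum_le_sum; intro k _; exact Set.indicator_le_self' (by simp) x
    _ = (Finset.Icc lo hi).card := by simp
    _ ≤ (((⌈2 * R / s⌉₊ + 1 : ℕ) ^ N : ℕ) : ℝ≥0∞) := by
        rw [Nat.cast_le (α := ℝ≥0∞)]
        rw [Pi.card_Icc]
        calc ∏ i, (Finset.Icc (lo i) (hi i)).card ≤ ∏ _i : Fin N, (⌈2 * R / s⌉₊ + 1) := by
              apply Finset.prod_le_prod (fun _ _ => Nat.zero_le _)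
              intro i _
              rw [Int.card_Icc]
              have h1 : (hi i : ℝ) ≤ (x i + R) / s := Int.floor_le _
              have h2 : ((x i - R) / s : ℝ) ≤ lo i := Int.le_ceil _
              have h3 : (hi i + 1 - lo i : ℝ) ≤ 2 * R / s + 1 := by
                have : ((x i + R) / s : ℝ) - (x i - R)/s = 2 * R / s := by
                  field_simp; ring
                push_cast
                linarith
              have h4 : hi i + 1 - lo i ≤ (⌈2 * R / s⌉₊ : ℤ) + 1 := by
                have h5 := Nat.le_ceil (2 * R / s)
                have : (hi i + 1 - lo i : ℝ) ≤ (⌈2 * R / s⌉₊ : ℝ) + 1 := by linarith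
                exact_mod_cast this
              omega
          _ = (⌈2 * R / s⌉₊ + 1) ^ N := by
              rw [Finset.prod_const]; simp

lemma ofReal_sq (t : ℝ) (ht : 0 ≤ t) :
    (ENNReal.ofReal t) ^ (2 : ℝ) = ENNReal.ofReal (t ^ 2) := by
  rw [ENNReal.rpow_two, ← ENNReal.ofReal_pow ht]

lemma percube (N : ℕ) (hN : 3 ≤ N) (p : ℝ) (hp : p = 2 * N / ((N : ℝ) - 2))
    (R : ℝ) (hR : 0 < R)
    (φ : ContDiffBump (0 : EuclideanSpace ℝ (Fin N))) (hφin : φ.rIn = R / 2)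
    (hφout : φ.rOut = R)
    (L : ℝ) (hL0 : 0 ≤ L) (hL : ∀ x, ‖fderiv ℝ (φ : EuclideanSpace ℝ (Fin N) → ℝ) x‖ ≤ L)
    (w : EuclideanSpace ℝ (Fin N) → ℝ) (hw : ContDiff ℝ 1 w)
    (hw3 : Integrable (fun x : EuclideanSpace ℝ (Fin N) => |w x| ^ p))
    (c : EuclideanSpace ℝ (Fin N)) :
    ∫⁻ y in closedBall c (R / 2), ENNReal.ofReal (|w y| ^ p) ≤
      ((eLpNormLESNormFDerivOfEqInnerConst
          (volume : Measure (EuclideanSpace ℝ (Fin N))) 2 : ℝ≥0∞)) ^ (2 : ℝ) *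
        (ENNReal.ofReal (⨆ x : EuclideanSpace ℝ (Fin N),
            ∫ y in closedBall x R, |w y| ^ p)) ^ ((p - 2) / p) *
        ∫⁻ y in closedBall c R,
          ENNReal.ofReal (2 * ‖fderiv ℝ w y‖ ^ 2 + 2 * L ^ 2 * (w y) ^ 2) := by
  have hN2 : (2 : ℝ) < (N : ℝ) := by exact_mod_cast by omega
  have hN2' : (0 : ℝ) < (N : ℝ) - 2 := by linarith
  have hp2 : 2 < p := by
    rw [hp, lt_div_iff₀ hN2']; linarith
  have hp1 : 0 < p := by linarith
  set ε := ⨆ x : EuclideanSpace ℝ (Fin N), ∫ y in closedBall x R, |w y| ^ p with hε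
  have hwnn : ∀ y : EuclideanSpace ℝ (Fin N), 0 ≤ |w y| ^ p := fun y => Real.rpow_nonneg (abs_nonneg _) _
  have hbdd : BddAbove (range fun x : EuclideanSpace ℝ (Fin N) => ∫ y in closedBall x R, |w y| ^ p) := by
    refine ⟨∫ y, |w y| ^ p, forall_mem_range.2 fun x => ?_⟩
    exact setIntegral_le_integral hw3 (Eventually.of_forall hwnn)
  have hball_le : ∀ x : EuclideanSpace ℝ (Fin N), (∫ y in closedBall x R, |w y| ^ p) ≤ ε := fun x => le_ciSup hbdd x
  -- cutoff
  set χ : EuclideanSpace ℝ (Fin N) → ℝ := fun x => φ (x - c) with hχ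
  set v : EuclideanSpace ℝ (Fin N) → ℝ := fun x => χ x * w x with hv
  have hχdiff : ContDiff ℝ 1 χ := φ.contDiff.comp (contDiff_id.sub contDiff_const)
  have hχ1 : ∀ x ∈ closedBall c (R / 2), χ x = 1 := by
    intro x hx
    exact φ.one_of_mem_closedBall (by
      simpa [mem_closedBall, dist_zero_right, ← dist_eq_norm, hφin] using hx)
  have hχ0 : ∀ x ∉ closedBall c R, χ x = 0 := by
    intro x hx
    by_contra h
    apply hx
    have : x - c ∈ Function.support (φ : EuclideanSpace ℝ (Fin N) → ℝ) := h
    rw [φ.support_eq, hφout] at this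
    have : ‖x - c‖ < R := by simpa [mem_ball, dist_zero_right] using this
    exact mem_closedBall.2 (by rw [dist_eq_norm]; linarith)
  have hvdiff : ContDiff ℝ 1 v := hχdiff.mul hw
  have hvsupp : HasCompactSupport v :=
    HasCompactSupport.intro (isCompact_closedBall c R) (fun x hx => by
      simp [hv, hχ0 x hx])
  have hχderiv : ∀ x : EuclideanSpace ℝ (Fin N), HasFDerivAt χ (fderiv ℝ (φ : EuclideanSpace ℝ (Fin N) → ℝ) (x - c)) x := by
    intro x
    have h1 : HasFDerivAt (φ : EuclideanSpace ℝ (Fin N) → ℝ) (fderiv ℝ (φ : EuclideanSpace ℝ (Fin N) → ℝ) (x - c)) (x - c) :=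
      ((φ.contDiff (n := 1)).differentiable (by norm_num) (x - c)).hasFDerivAt
    have h2 : HasFDerivAt (fun y : EuclideanSpace ℝ (Fin N) => y - c) (ContinuousLinearMap.id ℝ (EuclideanSpace ℝ (Fin N))) x :=
      (hasFDerivAt_id x).sub_const c
    have h3 := h1.comp x h2
    rw [ContinuousLinearMap.comp_id] at h3
    exact h3
  have hfv : ∀ x, fderiv ℝ v x = χ x • fderiv ℝ w x + w x • fderiv ℝ χ x := fun x =>
    fderiv_fun_mul (hχdiff.differentiable one_ne_zero x) (hw.differentiable one_ne_zero x)
  have hgradbound : ∀ x, ‖fderiv ℝ v x‖ ^ 2 ≤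
      (closedBall c R).indicator
        (fun y => 2 * ‖fderiv ℝ w y‖ ^ 2 + 2 * L ^ 2 * (w y) ^ 2) x := by
    intro x
    by_cases hx : x ∈ closedBall c R
    · rw [indicator_of_mem hx]
      have h1 : ‖fderiv ℝ v x‖ ≤ ‖fderiv ℝ w x‖ + L * |w x| := by
        rw [hfv x]
        calc ‖χ x • fderiv ℝ w x + w x • fderiv ℝ χ x‖
            ≤ ‖χ x • fderiv ℝ w x‖ + ‖w x • fderiv ℝ χ x‖ := norm_add_le _ _
          _ = |χ x| * ‖fderiv ℝ w x‖ + |w x| * ‖fderiv ℝ χ x‖ := by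
              rw [norm_smul, norm_smul, Real.norm_eq_abs, Real.norm_eq_abs]
          _ ≤ 1 * ‖fderiv ℝ w x‖ + |w x| * L := by
              gcongr
              · exact abs_le.2 ⟨by linarith [φ.nonneg (x := x - c)], φ.le_one⟩
              · rw [(hχderiv x).fderiv]; exact hL _
          _ = ‖fderiv ℝ w x‖ + L * |w x| := by ring
      have h2 : ‖fderiv ℝ v x‖ ^ 2 ≤ (‖fderiv ℝ w x‖ + L * |w x|) ^ 2 :=
        pow_le_pow_left₀ (norm_nonneg _) h1 2
      nlinarith [sq_nonneg (‖fderiv ℝ w x‖ - L * |w x|), sq_abs (w x)]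
    · rw [indicator_of_notMem hx]
      have hev : v =ᶠ[nhds x] 0 := by
        filter_upwards [isOpen_compl_iff.2 Metric.isClosed_closedBall |>.mem_nhds hx] with y hy
        simp [hv, hχ0 y hy]
      have : fderiv ℝ v x = 0 := by
        rw [hev.fderiv_eq]; exact fderiv_const_apply 0
      simp [this]
  -- Sobolev inequality machinery
  set K := eLpNormLESNormFDerivOfEqInnerConst (volume : Measure (EuclideanSpace ℝ (Fin N))) 2
    with hK
  set p' : ℝ≥0 := ⟨p, hp1.le⟩ with hp'def
  have hp'0 : (p' : ℝ≥0∞) ≠ 0 := by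
    simp only [ne_eq, ENNReal.coe_eq_zero]
    exact fun h => hp1.ne' (congrArg NNReal.toReal h)
  have hp'top : (p' : ℝ≥0∞) ≠ ⊤ := ENNReal.coe_ne_top
  have hp'toReal : ((p' : ℝ≥0∞)).toReal = p := by rw [ENNReal.coe_toReal]; rfl
  set T := eLpNorm v p' volume with hT
  set G := eLpNorm (fderiv ℝ v) 2 volume with hG
  have hNne : (N : ℝ) ≠ 0 := by positivity
  have hTG : T ≤ (K : ℝ≥0∞) * G := by
    have hinv : ((p' : ℝ))⁻¹ = ((2 : ℝ≥0) : ℝ)⁻¹ - ((N : ℝ))⁻¹ := by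
      have h1 : (p' : ℝ) = p := rfl
      rw [h1, hp, inv_div]
      push_cast
      field_simp
    have := eLpNorm_le_eLpNorm_fderiv_of_eq_inner
      (volume : Measure (EuclideanSpace ℝ (Fin N)))
      hvdiff hvsupp (p := 2) (p' := p') (by norm_num) (by simp; omega) (by simpa using hinv)
    simpa using this
  have habs : ∀ a : ℝ, (‖a‖₊ : ℝ≥0∞) ^ p = ENNReal.ofReal (|a| ^ p) := by
    intro a
    rw [← enorm_eq_nnnorm, ← ofReal_norm, Real.norm_eq_abs,
      ENNReal.ofReal_rpow_of_nonneg (abs_nonneg a) hp1.le]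
  have hTp : T ^ p = ∫⁻ x, ENNReal.ofReal (|v x| ^ p) := by
    rw [hT, eLpNorm_eq_lintegral_rpow_enorm_toReal hp'0 hp'top, hp'toReal, ← ENNReal.rpow_mul,
      one_div, inv_mul_cancel₀ hp1.ne', ENNReal.rpow_one]
    exact lintegral_congr fun x => habs (v x)
  have hTple : T ^ p ≤ ENNReal.ofReal ε := by
    rw [hTp]
    have hpt : ∀ x, ENNReal.ofReal (|v x| ^ p) ≤
        (closedBall c R).indicator (fun y => ENNReal.ofReal (|w y| ^ p)) x := by
      intro x
      by_cases hx : x ∈ closedBall c R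
      · rw [indicator_of_mem hx]
        apply ENNReal.ofReal_le_ofReal
        apply Real.rpow_le_rpow (abs_nonneg _) _ hp1.le
        rw [hv]
        simp only
        rw [abs_mul]
        calc |χ x| * |w x| ≤ 1 * |w x| := by
              apply mul_le_mul_of_nonneg_right _ (abs_nonneg _)
              exact abs_le.2 ⟨by linarith [φ.nonneg (x := x - c)], φ.le_one⟩
          _ = |w x| := one_mul _
      · rw [indicator_of_notMem hx]
        simp [hv, hχ0 x hx, Real.zero_rpow hp1.ne']
    calc ∫⁻ x, ENNReal.ofReal (|v x| ^ p)
        ≤ ∫⁻ x, (closedBall c R).indicator (fun y => ENNReal.ofReal (|w y| ^ p)) x :=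
          lintegral_mono hpt
      _ = ∫⁻ x in closedBall c R, ENNReal.ofReal (|w x| ^ p) :=
          lintegral_indicator measurableSet_closedBall _
      _ = ENNReal.ofReal (∫ y in closedBall c R, |w y| ^ p) :=
          (ofReal_integral_eq_lintegral_ofReal hw3.integrableOn
            (ae_of_all _ fun y => hwnn y)).symm
      _ ≤ ENNReal.ofReal ε := ENNReal.ofReal_le_ofReal (hball_le c)
  have hG2 : G ^ (2 : ℝ) ≤
      ∫⁻ y in closedBall c R,
        ENNReal.ofReal (2 * ‖fderiv ℝ w y‖ ^ 2 + 2 * L ^ 2 * (w y) ^ 2) := by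
    rw [hG, eLpNorm_eq_lintegral_rpow_enorm_toReal two_ne_zero ENNReal.ofNat_ne_top,
      ← ENNReal.rpow_mul, ENNReal.toReal_ofNat, one_div,
      inv_mul_cancel₀ (by norm_num : (2:ℝ) ≠ 0), ENNReal.rpow_one]
    calc ∫⁻ x, (‖fderiv ℝ v x‖₊ : ℝ≥0∞) ^ (2 : ℝ)
        ≤ ∫⁻ x, (closedBall c R).indicator
            (fun y => ENNReal.ofReal (2 * ‖fderiv ℝ w y‖ ^ 2 + 2 * L ^ 2 * (w y) ^ 2)) x := by
          apply lintegral_mono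
          intro x
          show (‖fderiv ℝ v x‖₊ : ℝ≥0∞) ^ (2 : ℝ) ≤
            (closedBall c R).indicator
              (fun y => ENNReal.ofReal (2 * ‖fderiv ℝ w y‖ ^ 2 + 2 * L ^ 2 * (w y) ^ 2)) x
          have hx2 : (‖fderiv ℝ v x‖₊ : ℝ≥0∞) ^ (2 : ℝ) = ENNReal.ofReal (‖fderiv ℝ v x‖ ^ 2) := by
            rw [← enorm_eq_nnnorm, ← ofReal_norm, ofReal_sq _ (norm_nonneg _)]
          rw [hx2]
          by_cases hx : x ∈ closedBall c R
          · rw [indicator_of_mem hx]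
            apply ENNReal.ofReal_le_ofReal
            have := hgradbound x
            rwa [indicator_of_mem hx] at this
          · rw [indicator_of_notMem hx]
            have := hgradbound x
            rw [indicator_of_notMem hx] at this
            have h0 : ‖fderiv ℝ v x‖ ^ 2 = 0 :=
              le_antisymm this (sq_nonneg _)
            simp [h0]
      _ = ∫⁻ x in closedBall c R,
            ENNReal.ofReal (2 * ‖fderiv ℝ w x‖ ^ 2 + 2 * L ^ 2 * (w x) ^ 2) :=
          lintegral_indicator measurableSet_closedBall _
  have hθ0 : (0 : ℝ) ≤ (p - 2) / p := by
    apply div_nonneg <;> linarith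
  have main : T ^ p ≤ (K : ℝ≥0∞) ^ (2 : ℝ) * (ENNReal.ofReal ε) ^ ((p - 2) / p) *
      ∫⁻ y in closedBall c R,
        ENNReal.ofReal (2 * ‖fderiv ℝ w y‖ ^ 2 + 2 * L ^ 2 * (w y) ^ 2) := by
    by_cases hT0 : T = 0
    · rw [hT0, ENNReal.zero_rpow_of_pos hp1]
      exact zero_le
    have hTtop : T ≠ ⊤ := by
      intro h
      rw [h, ENNReal.top_rpow_of_pos hp1] at hTple
      exact (ENNReal.ofReal_ne_top (top_le_iff.1 hTple)).elim
    have hsplit : T ^ p = T ^ (2 : ℝ) * T ^ (p - 2) := by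
      have h := ENNReal.rpow_add (x := T) 2 (p - 2) hT0 hTtop
      rw [show (2 : ℝ) + (p - 2) = p by ring] at h
      exact h
    rw [hsplit]
    have h1 : T ^ (2 : ℝ) ≤ (K : ℝ≥0∞) ^ (2 : ℝ) *
        ∫⁻ y in closedBall c R,
          ENNReal.ofReal (2 * ‖fderiv ℝ w y‖ ^ 2 + 2 * L ^ 2 * (w y) ^ 2) := by
      calc T ^ (2 : ℝ) ≤ ((K : ℝ≥0∞) * G) ^ (2 : ℝ) :=
            ENNReal.rpow_le_rpow hTG (by norm_num)
        _ = (K : ℝ≥0∞) ^ (2 : ℝ) * G ^ (2 : ℝ) :=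
            ENNReal.mul_rpow_of_nonneg _ _ (by norm_num)
        _ ≤ _ := mul_le_mul_right hG2 _
    have h2 : T ^ (p - 2) ≤ (ENNReal.ofReal ε) ^ ((p - 2) / p) := by
      have heq : T ^ (p - 2) = (T ^ p) ^ ((p - 2) / p) := by
        rw [← ENNReal.rpow_mul]
        congr 1
        field_simp
      rw [heq]
      exact ENNReal.rpow_le_rpow hTple hθ0
    calc T ^ (2 : ℝ) * T ^ (p - 2)
        ≤ ((K : ℝ≥0∞) ^ (2 : ℝ) *
            ∫⁻ y in closedBall c R,
              ENNReal.ofReal (2 * ‖fderiv ℝ w y‖ ^ 2 + 2 * L ^ 2 * (w y) ^ 2)) *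
          (ENNReal.ofReal ε) ^ ((p - 2) / p) := mul_le_mul' h1 h2
      _ = _ := by ring
  have hLHS : (∫⁻ y in closedBall c (R / 2), ENNReal.ofReal (|w y| ^ p)) ≤ T ^ p := by
    rw [hTp]
    have heq : (∫⁻ y in closedBall c (R / 2), ENNReal.ofReal (|w y| ^ p)) =
        ∫⁻ y in closedBall c (R / 2), ENNReal.ofReal (|v y| ^ p) := by
      apply setLIntegral_congr_fun measurableSet_closedBall
      intro y hy
      rw [hv]
      simp only
      rw [hχ1 y hy, one_mul]
    rw [heq]
    exact lintegral_mono' Measure.restrict_le_self le_rfl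
  exact hLHS.trans main

lemma lions_aux (N : ℕ) (hN : 3 ≤ N) (p : ℝ) (hp : p = 2 * N / ((N : ℝ) - 2))
    (R C : ℝ) (hR : 0 < R) (hC : 0 < C) :
    ∃ A : ℝ, 0 ≤ A ∧ ∀ w : EuclideanSpace ℝ (Fin N) → ℝ, ContDiff ℝ 1 w →
      Integrable (fun x : EuclideanSpace ℝ (Fin N) => (w x) ^ 2) →
      (∫ x : EuclideanSpace ℝ (Fin N), (w x) ^ 2) ≤ C →
      Integrable (fun x : EuclideanSpace ℝ (Fin N) => ‖fderiv ℝ w x‖ ^ 2) →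
      (∫ x : EuclideanSpace ℝ (Fin N), ‖fderiv ℝ w x‖ ^ 2) ≤ C →
      Integrable (fun x : EuclideanSpace ℝ (Fin N) => |w x| ^ p) →
      (∫ y : EuclideanSpace ℝ (Fin N), |w y| ^ p) ≤
        A * (⨆ x : EuclideanSpace ℝ (Fin N), ∫ y in closedBall x R, |w y| ^ p) ^ ((p - 2) / p) := by
  classical
  have hN2 : (2 : ℝ) < (N : ℝ) := by exact_mod_cast by omega
  have hN2' : (0 : ℝ) < (N : ℝ) - 2 := by linarith
  have hp2 : 2 < p := by rw [hp, lt_div_iff₀ hN2']; linarith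
  have hp1 : 0 < p := by linarith
  have hθ0 : (0 : ℝ) ≤ (p - 2) / p := by apply div_nonneg <;> linarith
  have hNpos : (0 : ℝ) < Real.sqrt N := Real.sqrt_pos.2 (by positivity)
  set s : ℝ := R / (2 * Real.sqrt N) with hs_def
  have hs : 0 < s := by positivity
  have hsN : s * Real.sqrt N = R / 2 := by
    rw [hs_def]; field_simp
  set φ : ContDiffBump (0 : EuclideanSpace ℝ (Fin N)) := ⟨R / 2, R, by linarith, by linarith⟩
    with hφ
  obtain ⟨L₀, hL₀⟩ :=
    ((φ.hasCompactSupport).fderiv ℝ).exists_bound_of_continuous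
      ((φ.contDiff (n := 1)).continuous_fderiv (by norm_num))
  set L := max L₀ 0 with hLdef
  have hL0 : 0 ≤ L := le_max_right _ _
  have hL : ∀ x, ‖fderiv ℝ (φ : EuclideanSpace ℝ (Fin N) → ℝ) x‖ ≤ L :=
    fun x => (hL₀ x).trans (le_max_left _ _)
  set M : ℕ := (⌈2 * R / s⌉₊ + 1) ^ N with hM
  set K : ℝ≥0 :=
    eLpNormLESNormFDerivOfEqInnerConst (volume : Measure (EuclideanSpace ℝ (Fin N))) 2 with hK
  set AE : ℝ≥0∞ := (K : ℝ≥0∞) ^ (2 : ℝ) * (M : ℝ≥0∞) *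
    ENNReal.ofReal (2 * C + 2 * L ^ 2 * C) with hAE
  have hAEtop : AE ≠ ⊤ := by
    rw [hAE]
    exact ENNReal.mul_ne_top
      (ENNReal.mul_ne_top (ENNReal.rpow_ne_top_of_nonneg (by norm_num) ENNReal.coe_ne_top)
        (ENNReal.natCast_ne_top M)) ENNReal.ofReal_ne_top
  refine ⟨AE.toReal, ENNReal.toReal_nonneg, ?_⟩
  intro w hw hw1 hi1 hw2 hi2 hw3
  set ε := ⨆ x : EuclideanSpace ℝ (Fin N), ∫ y in closedBall x R, |w y| ^ p with hε
  have hwnn : ∀ y : EuclideanSpace ℝ (Fin N), 0 ≤ |w y| ^ p :=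
    fun y => Real.rpow_nonneg (abs_nonneg _) _
  have hbdd : BddAbove (range fun x : EuclideanSpace ℝ (Fin N) =>
      ∫ y in closedBall x R, |w y| ^ p) := by
    refine ⟨∫ y, |w y| ^ p, forall_mem_range.2 fun x => ?_⟩
    exact setIntegral_le_integral hw3 (Eventually.of_forall hwnn)
  have hε0 : 0 ≤ ε := by
    refine le_trans ?_ (le_ciSup hbdd (0 : EuclideanSpace ℝ (Fin N)))
    exact setIntegral_nonneg measurableSet_closedBall fun y _ => hwnn y
  -- cube partition
  set Q : (Fin N → ℤ) → Set (EuclideanSpace ℝ (Fin N)) :=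
    fun k => {y | ∀ i, ⌊y i / s⌋ = k i} with hQ
  have hQeq : ∀ k, Q k = ⋂ i, (EuclideanSpace.proj (𝕜 := ℝ) i) ⁻¹'
      (Ico (s * k i) (s * (k i + 1))) := by
    intro k
    ext y
    simp only [hQ, mem_setOf_eq, mem_iInter, mem_preimage, mem_Ico]
    have hproj : ∀ i, (EuclideanSpace.proj (𝕜 := ℝ) i) y = y i := fun _ => rfl
    constructor
    · intro h i
      rw [hproj]
      obtain ⟨h1, h2⟩ := (Int.floor_eq_iff).1 (h i)
      rw [le_div_iff₀ hs] at h1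
      rw [div_lt_iff₀ hs] at h2
      constructor <;> nlinarith
    · intro h i
      have hi := h i
      rw [hproj] at hi
      rw [Int.floor_eq_iff, le_div_iff₀ hs, div_lt_iff₀ hs]
      constructor <;> nlinarith [hi.1, hi.2]
  have hQmeas : ∀ k, MeasurableSet (Q k) := by
    intro k
    rw [hQeq k]
    exact MeasurableSet.iInter fun i =>
      ((EuclideanSpace.proj (𝕜 := ℝ) i).continuous.measurable) measurableSet_Ico
  have hQdisj : Pairwise (Function.onFun Disjoint Q) := by
    intro k k' hkk'
    rw [Function.onFun]
    refine Set.disjoint_left.2 fun y hy hy' => hkk' ?_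
    funext i
    exact (hy i).symm.trans (hy' i)
  have hQunion : ⋃ k, Q k = univ := by
    refine eq_univ_of_forall fun y => mem_iUnion.2 ⟨fun i => ⌊y i / s⌋, fun i => rfl⟩
  have hQball : ∀ k, Q k ⊆ closedBall (ctr N s k) (R / 2) := by
    intro k y hy
    have := cube_subset_ball hs k y hy
    rw [hsN] at this
    exact mem_closedBall.2 this
  set g : EuclideanSpace ℝ (Fin N) → ℝ≥0∞ :=
    fun y => ENNReal.ofReal (2 * ‖fderiv ℝ w y‖ ^ 2 + 2 * L ^ 2 * (w y) ^ 2) with hg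
  have hgmeas : Measurable g := by
    apply ENNReal.measurable_ofReal.comp
    apply Continuous.measurable
    exact (continuous_const.mul ((hw.continuous_fderiv one_ne_zero).norm.pow 2)).add
      (continuous_const.mul (hw.continuous.pow 2))
  have hint : Integrable (fun y : EuclideanSpace ℝ (Fin N) =>
      2 * ‖fderiv ℝ w y‖ ^ 2 + 2 * L ^ 2 * (w y) ^ 2) :=
    (hw2.const_mul 2).add (hw1.const_mul (2 * L ^ 2))
  have hgnn : ∀ y : EuclideanSpace ℝ (Fin N),
      0 ≤ 2 * ‖fderiv ℝ w y‖ ^ 2 + 2 * L ^ 2 * (w y) ^ 2 := fun y => by positivity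
  have hglint : ∫⁻ y, g y ≤ ENNReal.ofReal (2 * C + 2 * L ^ 2 * C) := by
    rw [hg, ← ofReal_integral_eq_lintegral_ofReal hint (ae_of_all _ hgnn)]
    apply ENNReal.ofReal_le_ofReal
    rw [integral_add (hw2.const_mul 2) (hw1.const_mul (2 * L ^ 2)), integral_const_mul,
      integral_const_mul]
    have h2 : 2 * L ^ 2 * ∫ x : EuclideanSpace ℝ (Fin N), (w x) ^ 2 ≤ 2 * L ^ 2 * C :=
      mul_le_mul_of_nonneg_left hi1 (by positivity)
    linarith [h2, hi2]
  have hsum : ∑' k : Fin N → ℤ, ∫⁻ y in closedBall (ctr N s k) R, g y ≤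
      (M : ℝ≥0∞) * ∫⁻ y, g y := by
    have h1 : ∀ k : Fin N → ℤ, (∫⁻ y in closedBall (ctr N s k) R, g y) =
        ∫⁻ y, (closedBall (ctr N s k) R).indicator g y := fun k =>
      (lintegral_indicator measurableSet_closedBall _).symm
    rw [tsum_congr h1,
      ← lintegral_tsum fun k => (hgmeas.indicator measurableSet_closedBall).aemeasurable]
    calc ∫⁻ y, ∑' k : Fin N → ℤ, (closedBall (ctr N s k) R).indicator g y
        ≤ ∫⁻ y, (M : ℝ≥0∞) * g y := by
          apply lintegral_mono
          intro y
          show (∑' k : Fin N → ℤ, (closedBall (ctr N s k) R).indicator g y) ≤ (M : ℝ≥0∞) * g y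
          have hpt : ∑' k : Fin N → ℤ, (closedBall (ctr N s k) R).indicator g y =
              (∑' k : Fin N → ℤ,
                (closedBall (ctr N s k) R).indicator (fun _ => (1 : ℝ≥0∞)) y) * g y := by
            rw [← ENNReal.tsum_mul_right]
            refine tsum_congr fun k => ?_
            by_cases hy : y ∈ closedBall (ctr N s k) R <;> simp [hy]
          rw [hpt]
          exact mul_le_mul_left (counting hs hR y) _
      _ = (M : ℝ≥0∞) * ∫⁻ y, g y := lintegral_const_mul _ hgmeas
  have hmain : ENNReal.ofReal (∫ y, |w y| ^ p) ≤ AE * (ENNReal.ofReal ε) ^ ((p - 2) / p) := by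
    calc ENNReal.ofReal (∫ y, |w y| ^ p) = ∫⁻ y, ENNReal.ofReal (|w y| ^ p) :=
          ofReal_integral_eq_lintegral_ofReal hw3 (ae_of_all _ hwnn)
      _ = ∫⁻ y in ⋃ k, Q k, ENNReal.ofReal (|w y| ^ p) := by rw [hQunion, setLIntegral_univ]
      _ = ∑' k : Fin N → ℤ, ∫⁻ y in Q k, ENNReal.ofReal (|w y| ^ p) :=
          lintegral_iUnion hQmeas hQdisj _
      _ ≤ ∑' k : Fin N → ℤ, ((K : ℝ≥0∞) ^ (2 : ℝ) * (ENNReal.ofReal ε) ^ ((p - 2) / p) *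
            ∫⁻ y in closedBall (ctr N s k) R, g y) := by
          apply ENNReal.tsum_le_tsum
          intro k
          calc ∫⁻ y in Q k, ENNReal.ofReal (|w y| ^ p)
              ≤ ∫⁻ y in closedBall (ctr N s k) (R / 2), ENNReal.ofReal (|w y| ^ p) :=
                lintegral_mono' (Measure.restrict_mono (hQball k) le_rfl) le_rfl
            _ ≤ _ := percube N hN p hp R hR φ rfl rfl L hL0 hL w hw hw3 (ctr N s k)
      _ = (K : ℝ≥0∞) ^ (2 : ℝ) * (ENNReal.ofReal ε) ^ ((p - 2) / p) *
            ∑' k : Fin N → ℤ, ∫⁻ y in closedBall (ctr N s k) R, g y := ENNReal.tsum_mul_left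
      _ ≤ (K : ℝ≥0∞) ^ (2 : ℝ) * (ENNReal.ofReal ε) ^ ((p - 2) / p) *
            ((M : ℝ≥0∞) * ∫⁻ y, g y) := mul_le_mul_right hsum _
      _ ≤ (K : ℝ≥0∞) ^ (2 : ℝ) * (ENNReal.ofReal ε) ^ ((p - 2) / p) *
            ((M : ℝ≥0∞) * ENNReal.ofReal (2 * C + 2 * L ^ 2 * C)) :=
          mul_le_mul_right (mul_le_mul_right hglint _) _
      _ = AE * (ENNReal.ofReal ε) ^ ((p - 2) / p) := by rw [hAE]; ring
  have hfin : AE * (ENNReal.ofReal ε) ^ ((p - 2) / p) ≠ ⊤ :=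
    ENNReal.mul_ne_top hAEtop (ENNReal.rpow_ne_top_of_nonneg hθ0 ENNReal.ofReal_ne_top)
  have hfinal := ENNReal.toReal_mono hfin hmain
  rw [ENNReal.toReal_ofReal (integral_nonneg hwnn), ENNReal.toReal_mul,
    ENNReal.ofReal_rpow_of_nonneg hε0 hθ0,
    ENNReal.toReal_ofReal (Real.rpow_nonneg hε0 _)] at hfinal
  exact hfinal


/-- Lions-type vanishing lemma: if a bounded-in-`H¹` sequence has uniformly vanishing
local `L^{2*}` mass, then its `L^{2*}` norm tends to zero. -/
theorem stmt7 (N : ℕ) (hN : 3 ≤ N) (p : ℝ) (hp : p = 2 * N / ((N : ℝ) - 2))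
    (R C : ℝ) (hR : 0 < R) (hC : 0 < C)
    (u : ℕ → EuclideanSpace ℝ (Fin N) → ℝ)
    (hu : ∀ n, ContDiff ℝ 1 (u n))
    (hb1 : ∀ n, Integrable (fun x : EuclideanSpace ℝ (Fin N) => (u n x) ^ 2) ∧
      (∫ x : EuclideanSpace ℝ (Fin N), (u n x) ^ 2) ≤ C)
    (hb2 : ∀ n, Integrable (fun x : EuclideanSpace ℝ (Fin N) => ‖gradient (u n) x‖ ^ 2) ∧
      (∫ x : EuclideanSpace ℝ (Fin N), ‖gradient (u n) x‖ ^ 2) ≤ C)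
    (hb3 : ∀ n, Integrable (fun x : EuclideanSpace ℝ (Fin N) => |u n x| ^ p))
    (hvan : Tendsto
      (fun n => ⨆ x : EuclideanSpace ℝ (Fin N), ∫ y in closedBall x R, |u n y| ^ p)
      atTop (nhds 0)) :
    Tendsto (fun n => ∫ y : EuclideanSpace ℝ (Fin N), |u n y| ^ p) atTop (nhds 0) := by
  have hN2 : (2 : ℝ) < (N : ℝ) := by exact_mod_cast by omega
  have hN2' : (0 : ℝ) < (N : ℝ) - 2 := by linarith
  have hp2 : 2 < p := by rw [hp, lt_div_iff₀ hN2']; linarith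
  have hθpos : (0 : ℝ) < (p - 2) / p := by apply div_pos <;> linarith
  have hgradeq : ∀ n, (fun x : EuclideanSpace ℝ (Fin N) => ‖gradient (u n) x‖ ^ 2) =
      fun x => ‖fderiv ℝ (u n) x‖ ^ 2 := by
    intro n
    funext x
    rw [gradient, LinearIsometryEquiv.norm_map]
  obtain ⟨A, hA0, hA⟩ := lions_aux N hN p hp R C hR hC
  have key : ∀ n, (∫ y : EuclideanSpace ℝ (Fin N), |u n y| ^ p) ≤
      A * (⨆ x : EuclideanSpace ℝ (Fin N), ∫ y in closedBall x R, |u n y| ^ p) ^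
        ((p - 2) / p) := by
    intro n
    have h2 := hb2 n
    rw [hgradeq n] at h2
    exact hA (u n) (hu n) (hb1 n).1 (hb1 n).2 h2.1 h2.2 (hb3 n)
  have hlim : Tendsto (fun n => A *
      (⨆ x : EuclideanSpace ℝ (Fin N), ∫ y in closedBall x R, |u n y| ^ p) ^
        ((p - 2) / p)) atTop (nhds 0) := by
    have h1 : Tendsto (fun n =>
        (⨆ x : EuclideanSpace ℝ (Fin N), ∫ y in closedBall x R, |u n y| ^ p) ^
          ((p - 2) / p)) atTop (nhds 0) := by
      have := hvan.rpow_const (p := (p - 2) / p) (Or.inr hθpos.le)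
      simpa [Real.zero_rpow hθpos.ne'] using this
    simpa using h1.const_mul A
  refine squeeze_zero (fun n => integral_nonneg fun y => Real.rpow_nonneg (abs_nonneg _) _)
    key hlim
end

section
/- (Existence of a concentration radius.) Let N ≥ 1 be an integer, let h : ℝ^N → ℝ be nonnegative and Lebesgue integrable, and let K ⊆ ℝ^N be a nonempty compact set. For r ≥ 0 define G(r) = sup_{x ∈ K} ∫_{B_r(x)} h, where B_r(x) is the closed ball of radius r centered at x. Then for every τ with 0 < τ < ∫_{ℝ^N} h there exist σ > 0 and z ∈ K such that ∫_{B_σ(z)} h = τ and ∫_{B_σ(x)} h ≤ τ for all x ∈ K (that is, G(σ) = τ and the supremum defining G(σ) is attained at z). -/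
open MeasureTheory Metric Set Filter
open scoped ENNReal Topology

/-- Existence of a concentration radius: for any prescribed mass level `τ` below the total
mass, there is a radius `σ` and a center `z ∈ K` where the concentration function
`G(σ) = sup_{x ∈ K} ∫_{B_σ(x)} h` attains the value `τ`. -/
theorem stmt9 (N : ℕ) (hN : 1 ≤ N)
    (h : EuclideanSpace ℝ (Fin N) → ℝ) (hpos : ∀ x, 0 ≤ h x) (hint : Integrable h)
    (K : Set (EuclideanSpace ℝ (Fin N))) (hKne : K.Nonempty) (hKcpt : IsCompact K) :
    ∀ τ : ℝ, 0 < τ → τ < (∫ x : EuclideanSpace ℝ (Fin N), h x) →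
      ∃ σ > (0 : ℝ), ∃ z ∈ K, (∫ x in closedBall z σ, h x) = τ ∧
        ∀ x ∈ K, (∫ y in closedBall x σ, h y) ≤ τ := by
  intro τ hτ0 hτlt
  haveI : Nontrivial (EuclideanSpace ℝ (Fin N)) := by
    apply Module.nontrivial_of_finrank_pos (R := ℝ)
    rw [finrank_euclideanSpace_fin]; omega
  set f : EuclideanSpace ℝ (Fin N) → ℝ≥0∞ := fun x => ENNReal.ofReal (h x) with hf
  have hfeq : ∀ x, f x = (‖h x‖₊ : ℝ≥0∞) := fun x => (Real.enorm_eq_ofReal (hpos x)).symm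
  have hfin : ∫⁻ x, f x ≠ ⊤ := by
    simp only [hfeq]
    exact hint.hasFiniteIntegral.ne
  set ν := (volume : Measure (EuclideanSpace ℝ (Fin N))).withDensity f with hν
  have hνuniv : ν univ = ∫⁻ x, f x := by
    rw [withDensity_apply _ MeasurableSet.univ, Measure.restrict_univ]
  haveI : IsFiniteMeasure ν :=
    ⟨by rw [hνuniv]; exact lt_of_le_of_ne le_top hfin⟩
  -- real set integrals = ν-measure
  have hI : ∀ (x : EuclideanSpace ℝ (Fin N)) (r : ℝ),
      (∫ y in closedBall x r, h y) = (ν (closedBall x r)).toReal := by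
    intro x r
    rw [withDensity_apply _ measurableSet_closedBall,
      integral_eq_lintegral_of_nonneg_ae (Eventually.of_forall fun y => hpos y)
        hint.aestronglyMeasurable.restrict]
  -- spheres are null
  have hsph : ∀ (x : EuclideanSpace ℝ (Fin N)) (r : ℝ), ν (sphere x r) = 0 := by
    intro x r
    exact (withDensity_absolutelyContinuous volume f) (Measure.addHaar_sphere volume x r)
  have hcb_ball : ∀ (x : EuclideanSpace ℝ (Fin N)) (r : ℝ),
      ν (closedBall x r) ≤ ν (ball x r) := by
    intro x r
    calc ν (closedBall x r) ≤ ν (ball x r) + ν (sphere x r) := by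
          rw [← ball_union_sphere]; exact measure_union_le _ _
      _ = ν (ball x r) := by rw [hsph, add_zero]
  -- the set of good radii
  set S : Set ℝ := {r : ℝ | 0 ≤ r ∧ ∀ x ∈ K, ν (closedBall x r) ≤ ENNReal.ofReal τ}
    with hS
  -- S contains a positive radius
  obtain ⟨δ, hδ0, hδ⟩ :=
    exists_pos_setLIntegral_lt_of_measure_lt (μ := volume) hfin
      (ε := ENNReal.ofReal τ) (ENNReal.ofReal_pos.mpr hτ0).ne'
  have hvol_tendsto : Tendsto
      (fun n : ℕ => volume (closedBall (0 : EuclideanSpace ℝ (Fin N)) (1/(n+1))))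
      atTop (𝓝 (volume (⋂ n : ℕ, closedBall (0 : EuclideanSpace ℝ (Fin N)) (1/(n+1))))) := by
    refine tendsto_measure_iInter_atTop (fun n => measurableSet_closedBall.nullMeasurableSet)
      (fun n m hnm => closedBall_subset_closedBall ?_) ⟨0, measure_closedBall_lt_top.ne⟩
    gcongr
  have hiInter0 : (⋂ n : ℕ, closedBall (0 : EuclideanSpace ℝ (Fin N)) (1/(n+1))) = {0} := by
    apply Subset.antisymm
    · intro y hy
      simp only [mem_iInter, mem_closedBall] at hy
      have hle : dist y 0 ≤ 0 := ge_of_tendsto' tendsto_one_div_add_atTop_nhds_zero_nat hy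
      simpa [dist_le_zero] using hle
    · intro y hy
      simp only [mem_singleton_iff] at hy
      subst hy
      exact mem_iInter.2 fun n => mem_closedBall_self (by positivity)
  rw [hiInter0, measure_singleton] at hvol_tendsto
  obtain ⟨n0, hn0⟩ := (hvol_tendsto.eventually_lt_const hδ0).exists
  set r0 : ℝ := 1/(n0+1) with hr0
  have hr0pos : 0 < r0 := by positivity
  have hr0S : r0 ∈ S := by
    refine ⟨hr0pos.le, fun x _ => ?_⟩
    have hvol : volume (closedBall x r0) < δ := by
      rw [Measure.addHaar_closedBall_center]
      exact hn0
    have := hδ (closedBall x r0) hvol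
    rw [withDensity_apply _ measurableSet_closedBall]
    exact this.le
  have hSne : S.Nonempty := ⟨r0, hr0S⟩
  -- S is bounded above
  obtain ⟨x0, hx0⟩ := hKne
  have hνtot : ENNReal.ofReal τ < ν univ := by
    have h1 : (∫ x, h x) = (ν univ).toReal := by
      rw [← setIntegral_univ, withDensity_apply _ MeasurableSet.univ, Measure.restrict_univ,
        integral_eq_lintegral_of_nonneg_ae (Eventually.of_forall fun y => hpos y)
          hint.aestronglyMeasurable]
    have h2 : ENNReal.ofReal τ < ENNReal.ofReal ((ν univ).toReal) :=
      (ENNReal.ofReal_lt_ofReal_iff (lt_of_lt_of_le hτ0 (by rw [← h1] at *; linarith))).2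
        (by rw [← h1]; exact hτlt)
    rwa [ENNReal.ofReal_toReal (measure_ne_top ν univ)] at h2
  have hbigU : (⋃ n : ℕ, closedBall x0 (n : ℝ)) = univ := iUnion_closedBall_nat x0
  have hsup : ν univ = ⨆ n : ℕ, ν (closedBall x0 (n : ℝ)) := by
    rw [← hbigU]
    exact Directed.measure_iUnion
      ((monotone_nat_of_le_succ fun n =>
        closedBall_subset_closedBall (by exact_mod_cast Nat.le_succ n)).directed_le)
  obtain ⟨nR, hnR⟩ : ∃ n : ℕ, ENNReal.ofReal τ < ν (closedBall x0 (n : ℝ)) := by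
    rw [hsup] at hνtot
    exact lt_iSup_iff.1 hνtot
  have hbdd : BddAbove S := by
    refine ⟨(nR : ℝ), fun r hr => ?_⟩
    by_contra hcon
    push_neg at hcon
    have := hr.2 x0 hx0
    have hmono : ν (closedBall x0 (nR : ℝ)) ≤ ν (closedBall x0 r) :=
      measure_mono (closedBall_subset_closedBall hcon.le)
    exact absurd (hmono.trans this) (not_le.2 hnR)
  set σ := sSup S with hσ
  have hσpos : 0 < σ := lt_of_lt_of_le hr0pos (le_csSup hbdd hr0S)
  -- claim 1 : all balls of radius σ have measure ≤ τ
  have claim1 : ∀ x ∈ K, ν (closedBall x σ) ≤ ENNReal.ofReal τ := by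
    intro x hx
    refine le_trans (hcb_ball x σ) ?_
    have hsub : ball x σ ⊆ ⋃ n : ℕ, closedBall x (σ - σ/(n+1)) := by
      intro y hy
      have hd : dist y x < σ := hy
      obtain ⟨n, hn⟩ := exists_nat_ge (σ / (σ - dist y x))
      have hsd : 0 < σ - dist y x := by linarith
      have h1 : σ ≤ (σ - dist y x) * n := by
        rw [div_le_iff₀ hsd] at hn
        nlinarith
      refine mem_iUnion.2 ⟨n, ?_⟩
      have hn1 : (0:ℝ) < (n:ℝ) + 1 := by positivity
      have : σ / (n + 1) ≤ σ - dist y x := by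
        rw [div_le_iff₀ hn1]
        nlinarith [dist_nonneg (x := y) (y := x)]
      simp only [mem_closedBall]
      linarith
    have hUmono : Monotone fun n : ℕ => closedBall x (σ - σ/(n+1)) := by
      intro n m hnm
      apply closedBall_subset_closedBall
      have : σ / (m + 1) ≤ σ / (n + 1) := by
        apply div_le_div_of_nonneg_left hσpos.le (by positivity)
        exact_mod_cast by omega
      linarith
    calc ν (ball x σ) ≤ ν (⋃ n : ℕ, closedBall x (σ - σ/(n+1))) := measure_mono hsub
      _ = ⨆ n : ℕ, ν (closedBall x (σ - σ/(n+1))) := Directed.measure_iUnion hUmono.directed_le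
      _ ≤ ENNReal.ofReal τ := by
          refine iSup_le fun n => ?_
          have hlt : σ - σ/(n+1) < σ := by
            have : 0 < σ/(n+1) := by positivity
            linarith
          obtain ⟨r', hr'S, hrr'⟩ := exists_lt_of_lt_csSup hSne hlt
          exact le_trans
            (measure_mono (closedBall_subset_closedBall hrr'.le)) (hr'S.2 x hx)
  -- claim 2 : the value τ is attained at some z ∈ K
  have claim2 : ∃ z ∈ K, ENNReal.ofReal τ ≤ ν (closedBall z σ) := by
    by_contra hcon
    push_neg at hcon
    have hright : ∀ x ∈ K, ∃ ε > (0:ℝ),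
        ν (closedBall x (σ + ε)) < ENNReal.ofReal τ := by
      intro x hx
      have htend : Tendsto (fun n : ℕ => ν (closedBall x (σ + 1/(n+1)))) atTop
          (𝓝 (ν (⋂ n : ℕ, closedBall x (σ + 1/(n+1))))) := by
        refine tendsto_measure_iInter_atTop
          (fun n => measurableSet_closedBall.nullMeasurableSet)
          (fun n m hnm => closedBall_subset_closedBall ?_) ⟨0, (measure_ne_top ν _)⟩
        have : (1:ℝ)/(m+1) ≤ 1/(n+1) := by
          apply div_le_div_of_nonneg_left one_pos.le (by positivity)
          exact_mod_cast by omega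
        linarith
      have hiI : (⋂ n : ℕ, closedBall x (σ + 1/(n+1))) = closedBall x σ := by
        apply Subset.antisymm
        · intro y hy
          simp only [mem_iInter, mem_closedBall] at hy
          have hσt : Tendsto (fun n : ℕ => σ + 1/((n:ℝ)+1)) atTop (𝓝 σ) := by
            simpa using tendsto_one_div_add_atTop_nhds_zero_nat.const_add σ
          exact ge_of_tendsto' hσt hy
        · intro y hy
          exact mem_iInter.2 fun n =>
            closedBall_subset_closedBall (by have : (0:ℝ) < 1/((n:ℝ)+1) := by positivity
                                             linarith) hy
      rw [hiI] at htend
      obtain ⟨n, hn⟩ := (htend.eventually_lt_const (hcon x hx)).exists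
      exact ⟨1/(n+1), by positivity, hn⟩
    choose! ε hεpos hεlt using hright
    obtain ⟨t, ht⟩ := hKcpt.elim_nhds_subcover' (fun x hx => ball x (ε x / 2))
      (fun x hx => ball_mem_nhds x (by have := hεpos x hx; positivity))
    have htne : t.Nonempty := by
      rcases ht hx0 with hmem
      simp only [mem_iUnion] at hmem
      obtain ⟨i, hi, _⟩ := hmem
      exact ⟨i, hi⟩
    set εm : ℝ := t.inf' htne (fun x => ε x.1 / 2) with hεm
    have hεmpos : 0 < εm := by
      rw [hεm]
      apply Finset.lt_inf'_iff (α := ℝ) htne (a := 0) |>.2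
      intro i _
      have := hεpos i.1 i.2
      positivity
    have hmem : σ + εm ∈ S := by
      refine ⟨by linarith, fun y hy => ?_⟩
      have := ht hy
      simp only [mem_iUnion] at this
      obtain ⟨i, hi, hyi⟩ := this
      have hεmle : εm ≤ ε i.1 / 2 := Finset.inf'_le _ hi
      have hsub : closedBall y (σ + εm) ⊆ closedBall i.1 (σ + ε i.1) := by
        intro w hw
        simp only [mem_closedBall] at hw ⊢
        have hdyi : dist y i.1 < ε i.1 / 2 := hyi
        calc dist w i.1 ≤ dist w y + dist y i.1 := dist_triangle _ _ _
          _ ≤ (σ + εm) + ε i.1 / 2 := by linarith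
          _ ≤ σ + ε i.1 := by linarith
      exact le_trans (measure_mono hsub) (hεlt i.1 i.2).le
    have : σ + εm ≤ σ := le_csSup hbdd hmem
    linarith
  obtain ⟨z, hzK, hz⟩ := claim2
  have hzeq : ν (closedBall z σ) = ENNReal.ofReal τ := le_antisymm (claim1 z hzK) hz
  refine ⟨σ, hσpos, z, hzK, ?_, ?_⟩
  · rw [hI, hzeq, ENNReal.toReal_ofReal hτ0.le]
  · intro x hx
    rw [hI]
    calc (ν (closedBall x σ)).toReal ≤ (ENNReal.ofReal τ).toReal :=
          ENNReal.toReal_mono ENNReal.ofReal_ne_top (claim1 x hx)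
      _ = τ := ENNReal.toReal_ofReal hτ0.le
end
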